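/- arXiv:1509.09047 — 11 statements merged into one kernel-verified Lean document; each statement's English description precedes it below -/
import Mathlib

section
/- Let ≈ be a congruence on M and r : M → M a representative projection for ≈, i.e., x ≈ r(x) for all x ∈ M, and r(x) = r(y) whenever x ≈ y. Fix a matrix A : Matrix V V S and define F, F_r : (V → M) → (V → M) by F(y)_v = ∑_{w} A v w • y_w and F_r(y)_v = r(∑_{w} A v w • y_w). Then for every x : V → M and every h ∈ ℕ, filtering the result of h unfiltered iterations equals h filtered iterations started from the filtered input: r ∘ (F^{[h]}(x)) = F_r^{[h]}(r ∘ x) (where F^{[h]} denotes h-fold iteration and r is applied componentwise). -/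
variable {S M V : Type*}

/-- Action of a matrix over the semiring `S` on `M`-valued vectors:
`(A x)_v = ∑ w, A v w • x w`. -/
def matVec [Semiring S] [AddCommMonoid M] [Module S M] [Fintype V]
    (A : Matrix V V S) (x : V → M) : V → M :=
  fun v => ∑ w, A v w • x w

theorem R_sum [AddCommMonoid M] {ι : Type*} (R : M → M → Prop) (hequiv : Equivalence R)
    (hadd : ∀ x x' y y' : M, R x x' → R y y' → R (x + y) (x' + y'))
    (s : Finset ι) (f g : ι → M) (hfg : ∀ i ∈ s, R (f i) (g i)) :
    R (∑ i ∈ s, f i) (∑ i ∈ s, g i) := by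
  classical
  induction s using Finset.induction_on with
  | empty => simpa using hequiv.refl 0
  | insert _ _ hni ih =>
    rw [Finset.sum_insert hni, Finset.sum_insert hni]
    exact hadd _ _ _ _ (hfg _ (Finset.mem_insert_self _ _))
      (ih fun i hi => hfg i (Finset.mem_insert_of_mem hi))

/-- Filtering the result of `h` unfiltered iterations equals `h` filtered iterations
started from the filtered input: `r ∘ (F^[h] x) = F_r^[h] (r ∘ x)`. -/
theorem filtered_iterations [Semiring S] [AddCommMonoid M] [Module S M] [Fintype V]
    (R : M → M → Prop) (hequiv : Equivalence R)
    (hsmul : ∀ (s : S) (x x' : M), R x x' → R (s • x) (s • x'))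
    (hadd : ∀ x x' y y' : M, R x x' → R y y' → R (x + y) (x' + y'))
    (r : M → M) (hr₁ : ∀ x, R x (r x)) (hr₂ : ∀ x y, R x y → r x = r y)
    (A : Matrix V V S) (x : V → M) (h : ℕ) :
    (fun v => r ((matVec A)^[h] x v)) =
      (fun (y : V → M) (v : V) => r (matVec A y v))^[h] (fun v => r (x v)) := by
  induction h generalizing x with
  | zero => simp
  | succ n ih =>
    rw [Function.iterate_succ_apply, Function.iterate_succ_apply, ih (matVec A x)]
    congr 1
    funext v
    apply hr₂
    exact R_sum R hequiv hadd _ _ _ fun w _ => hsmul _ _ _ (hr₁ _)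
end

section
/- The source-detection filter r is a representative projection of a congruence relation, namely: (i) r(r(x)) = r(x) for all x; (ii) if r(x) = r(x'), then r(s ⊙ x) = r(s ⊙ x') for every s ∈ ℝ≥0∞; (iii) if r(x) = r(x') and r(y) = r(y'), then r(x ⊕ y) = r(x' ⊕ y'). -/
open scoped ENNReal Classical

variable {V : Type*}

/-- `v` is kept in `x`: it is a source, its value is at most `d`, and fewer than `k`
sources `w` are lexicographically smaller, i.e. satisfy `(x w, w) < (x v, v)`. -/
def Kept [LinearOrder V] (S : Set V) (d : ℝ≥0∞) (k : ℕ) (x : V → ℝ≥0∞) (v : V) : Prop :=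
  v ∈ S ∧ x v ≤ d ∧
    ({w : V | w ∈ S ∧ (x w < x v ∨ (x w = x v ∧ w < v))}).ncard < k

/-- The source-detection filter: keep the entry of `v` if `v` is kept, else set it to `∞`. -/
noncomputable def sdFilter [LinearOrder V] (S : Set V) (d : ℝ≥0∞) (k : ℕ)
    (x : V → ℝ≥0∞) (v : V) : ℝ≥0∞ :=
  if Kept S d k x v then x v else ⊤

section Aux

variable [Fintype V] [LinearOrder V] {S : Set V} {d : ℝ≥0∞} {k : ℕ}

/-- The lexicographic key of `v` in `x`. -/
noncomputable def Lkey (x : V → ℝ≥0∞) (v : V) : ℝ≥0∞ ×ₗ V := toLex (x v, v)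

lemma Lkey_lt_iff {x : V → ℝ≥0∞} {w v : V} :
    Lkey x w < Lkey x v ↔ (x w < x v ∨ (x w = x v ∧ w < v)) :=
  Prod.Lex.lt_iff

lemma Lkey_le_Lkey {x z : V → ℝ≥0∞} {v : V} (h : x v ≤ z v) : Lkey x v ≤ Lkey z v :=
  Prod.Lex.le_iff.mpr (h.lt_or_eq.imp id fun e => ⟨e, le_rfl⟩)

lemma Lkey_lt_val_le {x : V → ℝ≥0∞} {w v : V} (h : Lkey x w < Lkey x v) : x w ≤ x v := by
  rcases Lkey_lt_iff.mp h with h | h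
  · exact h.le
  · exact h.1.le

lemma kept_iff {x : V → ℝ≥0∞} {v : V} :
    Kept S d k x v ↔ v ∈ S ∧ x v ≤ d ∧ ({w | w ∈ S ∧ Lkey x w < Lkey x v}).ncard < k := by
  unfold Kept
  simp only [Lkey_lt_iff]

lemma le_sdFilter (x : V → ℝ≥0∞) (v : V) : x v ≤ sdFilter S d k x v := by
  unfold sdFilter; split
  · exact le_rfl
  · exact le_top

lemma sdFilter_of_kept {x : V → ℝ≥0∞} {v : V} (h : Kept S d k x v) :
    sdFilter S d k x v = x v := if_pos h

/-- Downward closure of the kept set in lexicographic order. -/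
lemma kept_down {x : V → ℝ≥0∞} {v w : V} (hv : Kept S d k x v)
    (hwS : w ∈ S) (hlt : Lkey x w < Lkey x v) : Kept S d k x w := by
  rw [kept_iff] at hv ⊢
  refine ⟨hwS, (Lkey_lt_val_le hlt).trans hv.2.1,
    lt_of_le_of_lt (Set.ncard_le_ncard ?_ (Set.toFinite _)) hv.2.2⟩
  rintro u ⟨huS, hu⟩
  exact ⟨huS, hu.trans hlt⟩

lemma kept_of_kept_ge {x z : V → ℝ≥0∞} (hle : ∀ v, x v ≤ z v)
    (heq : ∀ v, Kept S d k x v → z v = x v) {v : V} (hv : Kept S d k z v) :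
    Kept S d k x v := by
  rw [kept_iff] at hv ⊢
  obtain ⟨hvS, hvd, hvc⟩ := hv
  refine ⟨hvS, (hle v).trans hvd, ?_⟩
  by_contra hk
  push_neg at hk
  have hLv : Lkey x v ≤ Lkey z v := Lkey_le_Lkey (hle v)
  have claim1 : ∀ u, Kept S d k x u → Lkey x u < Lkey x v →
      u ∈ {w | w ∈ S ∧ Lkey z w < Lkey z v} := by
    intro u hu hlt
    have hz : Lkey z u = Lkey x u := by unfold Lkey; rw [heq u hu]
    exact ⟨hu.1, by rw [hz]; exact lt_of_lt_of_le hlt hLv⟩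
  by_cases hall : ∀ w ∈ {w | w ∈ S ∧ Lkey x w < Lkey x v}, Kept S d k x w
  · have hsub : {w | w ∈ S ∧ Lkey x w < Lkey x v} ⊆ {w | w ∈ S ∧ Lkey z w < Lkey z v} :=
      fun w hw => claim1 w (hall w hw) hw.2
    exact absurd (hk.trans (Set.ncard_le_ncard hsub (Set.toFinite _))) (not_le.mpr hvc)
  · push_neg at hall
    obtain ⟨w₀, hw₀A, hw₀⟩ := hall
    have hTne : ({w | (w ∈ S ∧ Lkey x w < Lkey x v) ∧ ¬ Kept S d k x w}).toFinset.Nonempty :=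
      ⟨w₀, by rw [Set.mem_toFinset]; exact ⟨hw₀A, hw₀⟩⟩
    obtain ⟨w, hwT, hwmin⟩ := Finset.exists_min_image _ (Lkey x) hTne
    rw [Set.mem_toFinset] at hwT
    obtain ⟨⟨hwS, hwlt⟩, hwk⟩ := hwT
    have hwd : x w ≤ d := (Lkey_lt_val_le hwlt).trans ((hle v).trans hvd)
    have hkw : k ≤ ({u | u ∈ S ∧ Lkey x u < Lkey x w}).ncard := by
      by_contra h'
      exact hwk (kept_iff.mpr ⟨hwS, hwd, not_le.mp h'⟩)
    have hsub : {u | u ∈ S ∧ Lkey x u < Lkey x w} ⊆ {w | w ∈ S ∧ Lkey z w < Lkey z v} := by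
      rintro u ⟨huS, hu⟩
      have hulv : Lkey x u < Lkey x v := hu.trans hwlt
      have huk : Kept S d k x u := by
        by_contra hunk
        exact absurd (hwmin u (Set.mem_toFinset.mpr ⟨⟨huS, hulv⟩, hunk⟩)) (not_le.mpr hu)
      exact claim1 u huk hulv
    exact absurd (hkw.trans (Set.ncard_le_ncard hsub (Set.toFinite _))) (not_le.mpr hvc)

lemma kept_of_kept_le {x z : V → ℝ≥0∞} (hle : ∀ v, x v ≤ z v)
    (heq : ∀ v, Kept S d k x v → z v = x v) {v : V} (hv : Kept S d k x v) :
    Kept S d k z v := by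
  have hzv : z v = x v := heq v hv
  have hLzv : Lkey z v = Lkey x v := by unfold Lkey; rw [hzv]
  have hset : {w | w ∈ S ∧ Lkey z w < Lkey z v} = {w | w ∈ S ∧ Lkey x w < Lkey x v} := by
    ext w
    constructor
    · rintro ⟨hwS, h⟩
      exact ⟨hwS, lt_of_le_of_lt (Lkey_le_Lkey (hle w)) (hLzv ▸ h)⟩
    · rintro ⟨hwS, h⟩
      have hkw : Kept S d k x w := kept_down hv hwS h
      have : Lkey z w = Lkey x w := by unfold Lkey; rw [heq w hkw]
      exact ⟨hwS, by rw [this, hLzv]; exact h⟩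
  rw [kept_iff] at hv ⊢
  exact ⟨hv.1, by rw [hzv]; exact hv.2.1, by rw [hset]; exact hv.2.2⟩

/-- The master congruence lemma: raising values outside the kept set does not change
the filter output. -/
lemma sdFilter_congr {x z : V → ℝ≥0∞} (hle : ∀ v, x v ≤ z v)
    (heq : ∀ v, Kept S d k x v → z v = x v) :
    sdFilter S d k z = sdFilter S d k x := by
  funext v
  unfold sdFilter
  by_cases h : Kept S d k x v
  · rw [if_pos (kept_of_kept_le hle heq h), if_pos h, heq v h]
  · rw [if_neg (fun hz => h (kept_of_kept_ge hle heq hz)), if_neg h]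

lemma kept_add {s : ℝ≥0∞} (hs : s ≠ ⊤) {x : V → ℝ≥0∞} {v : V}
    (hv : Kept S d k (fun w => s + x w) v) : Kept S d k x v := by
  rw [kept_iff] at hv ⊢
  obtain ⟨hvS, hvd, hvc⟩ := hv
  refine ⟨hvS, le_trans le_add_self hvd, ?_⟩
  have hset : {w | w ∈ S ∧ Lkey x w < Lkey x v}
      = {w | w ∈ S ∧ Lkey (fun w => s + x w) w < Lkey (fun w => s + x w) v} := by
    ext w
    simp only [Set.mem_setOf_eq, Lkey_lt_iff, ENNReal.add_lt_add_iff_left hs,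
      ENNReal.add_right_inj hs]
  rw [hset]
  exact hvc

lemma kept_min_left {x y : V → ℝ≥0∞} {v : V} (hxy : x v ≤ y v)
    (hv : Kept S d k (fun w => min (x w) (y w)) v) : Kept S d k x v := by
  rw [kept_iff] at hv ⊢
  obtain ⟨hvS, hvd, hvc⟩ := hv
  have hmv : min (x v) (y v) = x v := min_eq_left hxy
  refine ⟨hvS, by rw [← hmv]; exact hvd, ?_⟩
  refine lt_of_le_of_lt (Set.ncard_le_ncard ?_ (Set.toFinite _)) hvc
  rintro w ⟨hwS, hw⟩
  refine ⟨hwS, lt_of_le_of_lt (Lkey_le_Lkey (min_le_left _ _)) ?_⟩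
  have : Lkey (fun w => min (x w) (y w)) v = Lkey x v := by simp only [Lkey, hmv]
  rw [this]
  exact hw

end Aux

/-- The source-detection filter is a representative projection of a congruence relation:
it is idempotent, and compatible with uniform translation `(s ⊙ x)_v = s + x_v` and
pointwise minimum `(x ⊕ y)_v = min (x_v) (y_v)`. -/
theorem sdFilter_projection_congruence [Fintype V] [LinearOrder V]
    (S : Set V) (d : ℝ≥0∞) (k : ℕ) :
    (∀ x : V → ℝ≥0∞, sdFilter S d k (sdFilter S d k x) = sdFilter S d k x) ∧
    (∀ (x x' : V → ℝ≥0∞) (s : ℝ≥0∞), sdFilter S d k x = sdFilter S d k x' →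
      sdFilter S d k (fun v => s + x v) = sdFilter S d k (fun v => s + x' v)) ∧
    (∀ x x' y y' : V → ℝ≥0∞, sdFilter S d k x = sdFilter S d k x' →
      sdFilter S d k y = sdFilter S d k y' →
      sdFilter S d k (fun v => min (x v) (y v)) =
        sdFilter S d k (fun v => min (x' v) (y' v))) := by
  refine ⟨?_, ?_, ?_⟩
  · intro x
    exact sdFilter_congr (le_sdFilter x) (fun v hv => sdFilter_of_kept hv)
  · intro x x' s h
    by_cases hs : s = ⊤
    · subst hs
      simp only [top_add]
    · have key : ∀ u : V → ℝ≥0∞,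
          sdFilter S d k (fun v => s + sdFilter S d k u v) = sdFilter S d k (fun v => s + u v) :=
        fun u => sdFilter_congr (fun v => add_le_add_right (le_sdFilter u v) s)
          (fun v hv => by rw [sdFilter_of_kept (kept_add hs hv)])
      rw [← key x, ← key x', h]
  · intro x x' y y' hx hy
    have key : ∀ u w : V → ℝ≥0∞,
        sdFilter S d k (fun v => min (sdFilter S d k u v) (sdFilter S d k w v)) =
          sdFilter S d k (fun v => min (u v) (w v)) := by
      intro u w
      refine sdFilter_congr (fun v => min_le_min (le_sdFilter u v) (le_sdFilter w v)) ?_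
      intro v hv
      rcases le_total (u v) (w v) with huw | hwu
      · have hk : Kept S d k u v := kept_min_left huw hv
        rw [sdFilter_of_kept hk, min_eq_left (huw.trans (le_sdFilter w v)), min_eq_left huw]
      · have hcomm : (fun z => min (u z) (w z)) = (fun z => min (w z) (u z)) :=
          funext fun z => min_comm _ _
        have hk : Kept S d k w v := kept_min_left hwu (hcomm ▸ hv)
        rw [sdFilter_of_kept hk, min_eq_right (hwu.trans (le_sdFilter u v)), min_eq_right hwu]
    rw [← key x y, ← key x' y', hx, hy]
end

section
/- The all-paths operations form a semiring on the set of functions P → ℝ≥0∞: ⊕ is associative, commutative, and has neutral element 0; ⊙ is associative with two-sided neutral element 1; the distributive laws x ⊙ (y ⊕ z) = (x ⊙ y) ⊕ (x ⊙ z) and (y ⊕ z) ⊙ x = (y ⊙ x) ⊕ (z ⊙ x) hold for all x, y, z; and 0 is a two-sided annihilator for ⊙, i.e., 0 ⊙ x = x ⊙ 0 = 0. -/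
open scoped ENNReal

/-- A path over `V`: a nonempty duplicate-free list of vertices. -/
def PathOn (V : Type*) := {l : List V // l ≠ [] ∧ l.Nodup}

/-- `(π₁, π₂)` is a split of `π`: both are nonempty, the last element of `π₁` equals the
head of `π₂`, and `π = π₁ ++ tail π₂`. -/
def IsSplit {V : Type*} (π π₁ π₂ : List V) : Prop :=
  π₁ ≠ [] ∧ π₂ ≠ [] ∧ π₁.getLast? = π₂.head? ∧ π = π₁ ++ π₂.tail

/-- All-paths addition: pointwise minimum. -/
noncomputable def pAdd {V : Type*} (x y : PathOn V → ℝ≥0∞) : PathOn V → ℝ≥0∞ :=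
  fun π => min (x π) (y π)

/-- All-paths multiplication:
`(x ⊙ y)(π) = inf { x(π₁) + y(π₂) : (π₁, π₂) a split of π }` (with `inf ∅ = ∞`). -/
noncomputable def pMul {V : Type*} (x y : PathOn V → ℝ≥0∞) : PathOn V → ℝ≥0∞ :=
  fun π => sInf {c | ∃ π₁ π₂ : PathOn V, IsSplit π.1 π₁.1 π₂.1 ∧ c = x π₁ + y π₂}

/-- The all-paths zero: the constant-`∞` function. -/
noncomputable def pZero {V : Type*} : PathOn V → ℝ≥0∞ := fun _ => ⊤

/-- The all-paths one: `0` on single-vertex paths, `∞` elsewhere. -/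
noncomputable def pOne {V : Type*} : PathOn V → ℝ≥0∞ :=
  fun π => if π.1.length = 1 then 0 else ⊤

section Aux

variable {V : Type*}

lemma eq_cons_of_head?_aux {α : Type*} {l : List α} {a : α} (h : l.head? = some a) :
    l = a :: l.tail := by
  cases l <;> simp_all

lemma head?_append_aux {α : Type*} {a : List α} (b : List α) (ha : a ≠ []) :
    (a ++ b).head? = a.head? := by
  cases a <;> simp_all

lemma tail_append_aux {α : Type*} {a : List α} (b : List α) (ha : a ≠ []) :
    (a ++ b).tail = a.tail ++ b := by
  cases a <;> simp_all

lemma getLast?_glue_aux {a b : List V} (ha : a ≠ []) (hb : b ≠ [])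
    (h : a.getLast? = b.head?) : (a ++ b.tail).getLast? = b.getLast? := by
  rcases b with _ | ⟨h₀, t⟩
  · exact absurd rfl hb
  rcases t with _ | ⟨h₁, t'⟩
  · simpa using h
  · rw [List.tail_cons, List.getLast?_cons_cons, List.getLast?_append]
    have : (h₁ :: t').getLast? = some ((h₁ :: t').getLast (by simp)) :=
      List.getLast?_eq_getLast _
    rw [this]
    simp

lemma isSplit_nodup {l p q : List V} (hs : IsSplit l p q) (hl : l.Nodup) :
    p.Nodup ∧ q.Nodup := by
  obtain ⟨hp, hq, hlast, rfl⟩ := hs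
  rw [List.nodup_append] at hl
  refine ⟨hl.1, ?_⟩
  have hqc : q.head hq :: q.tail = q := List.cons_head_tail hq
  rw [← hqc, List.nodup_cons]
  refine ⟨?_, hl.2.1⟩
  intro mem
  have hhead : p.getLast hp = q.head hq := by
    rw [List.getLast?_eq_getLast hp, List.head?_eq_head hq] at hlast
    exact Option.some.inj hlast
  exact hl.2.2 _ (List.getLast_mem hp) _ mem hhead

lemma split_glue {l a b c : List V}
    (h1 : IsSplit l (a ++ b.tail) c) (h2 : IsSplit (a ++ b.tail) a b) :
    IsSplit l a (b ++ c.tail) ∧ IsSplit (b ++ c.tail) b c := by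
  obtain ⟨_, hc, hlast1, hl⟩ := h1
  obtain ⟨ha, hb, hlast2, _⟩ := h2
  constructor
  · refine ⟨ha, by simp [hb], ?_, ?_⟩
    · rw [head?_append_aux _ hb]; exact hlast2
    · rw [tail_append_aux _ hb, hl, List.append_assoc]
  · refine ⟨hb, hc, ?_, rfl⟩
    rw [← getLast?_glue_aux ha hb hlast2]; exact hlast1

lemma split_glue' {l a b c : List V}
    (h1 : IsSplit l a (b ++ c.tail)) (h2 : IsSplit (b ++ c.tail) b c) :
    IsSplit l (a ++ b.tail) c ∧ IsSplit (a ++ b.tail) a b := by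
  obtain ⟨ha, _, hlast1, hl⟩ := h1
  obtain ⟨hb, hc, hlast2, _⟩ := h2
  constructor
  · refine ⟨by simp [ha], hc, ?_, ?_⟩
    · rw [getLast?_glue_aux ha hb ?_]
      · exact hlast2
      · rw [hlast1, head?_append_aux _ hb]
    · rw [hl, tail_append_aux _ hb, List.append_assoc]
  · refine ⟨ha, hb, ?_, rfl⟩
    rw [hlast1, head?_append_aux _ hb]

lemma pMul_assoc_aux (x y z : PathOn V → ℝ≥0∞) :
    pMul (pMul x y) z = pMul x (pMul y z) := by
  funext π
  apply le_antisymm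
  · apply le_sInf
    rintro c ⟨a, ρ, hsplit, rfl⟩
    rw [show x a + pMul y z ρ = pMul y z ρ + x a from add_comm _ _]
    unfold pMul
    rw [ENNReal.sInf_add]
    apply le_iInf₂
    rintro u ⟨b, cc, hs2, rfl⟩
    -- build p₁ = a.1 ++ b.1.tail
    have hρ : ρ.1 = b.1 ++ cc.1.tail := hs2.2.2.2
    rw [hρ] at hsplit hs2
    obtain ⟨hsl, hsr⟩ := split_glue' hsplit hs2
    have hnodup : (a.1 ++ b.1.tail).Nodup := (isSplit_nodup hsl π.2.2).1
    set p₁ : PathOn V := ⟨a.1 ++ b.1.tail, by simp [a.2.1], hnodup⟩ with hp₁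
    calc sInf {c | ∃ π₁ π₂ : PathOn V, IsSplit π.1 π₁.1 π₂.1 ∧ c = pMul x y π₁ + z π₂}
        ≤ pMul x y p₁ + z cc := sInf_le ⟨p₁, cc, hsl, rfl⟩
      _ ≤ (x a + y b) + z cc := by
          gcongr
          exact sInf_le ⟨a, b, hsr, rfl⟩
      _ = y b + z cc + x a := by ring
  · apply le_sInf
    rintro c ⟨p₁, cc, hsplit, rfl⟩
    rw [show pMul x y p₁ + z cc = pMul x y p₁ + z cc from rfl]
    unfold pMul
    rw [ENNReal.sInf_add]
    apply le_iInf₂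
    rintro u ⟨a, b, hs2, rfl⟩
    have hp₁ : p₁.1 = a.1 ++ b.1.tail := hs2.2.2.2
    rw [hp₁] at hsplit hs2
    obtain ⟨hsl, hsr⟩ := split_glue hsplit hs2
    have hnodup : (b.1 ++ cc.1.tail).Nodup := (isSplit_nodup hsl π.2.2).2
    set ρ : PathOn V := ⟨b.1 ++ cc.1.tail, by simp [b.2.1], hnodup⟩ with hρ
    calc sInf {c | ∃ π₁ π₂ : PathOn V, IsSplit π.1 π₁.1 π₂.1 ∧
          c = x π₁ + sInf {d | ∃ σ₁ σ₂ : PathOn V, IsSplit π₂.1 σ₁.1 σ₂.1 ∧ d = y σ₁ + z σ₂}}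
        ≤ x a + sInf {d | ∃ σ₁ σ₂ : PathOn V, IsSplit ρ.1 σ₁.1 σ₂.1 ∧ d = y σ₁ + z σ₂} :=
          sInf_le ⟨a, ρ, hsl, rfl⟩
      _ ≤ x a + (y b + z cc) := by
          gcongr
          exact sInf_le ⟨b, cc, hsr, rfl⟩
      _ = x a + y b + z cc := by ring

lemma pMul_one_left (x : PathOn V → ℝ≥0∞) : pMul pOne x = x := by
  funext π
  apply le_antisymm
  · have hne := π.2.1
    have hmem : (pOne (V := V) ⟨[π.1.head hne], by simp⟩ + x π) ∈
        {c | ∃ π₁ π₂ : PathOn V, IsSplit π.1 π₁.1 π₂.1 ∧ c = pOne π₁ + x π₂} := by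
      refine ⟨⟨[π.1.head hne], by simp⟩, π, ⟨by simp, hne, ?_, by simp⟩, rfl⟩
      simp [List.head?_eq_head hne]
    refine le_trans (sInf_le hmem) ?_
    simp [pOne]
  · apply le_sInf
    rintro c ⟨p₁, p₂, ⟨h1, h2, h3, h4⟩, rfl⟩
    by_cases hl : p₁.1.length = 1
    · obtain ⟨v, hv⟩ := List.length_eq_one_iff.mp hl
      have hv' : p₂.1.head? = some v := by rw [← h3, hv]; rfl
      have hp2 : p₂ = π := by
        apply Subtype.ext
        rw [h4, hv]
        simpa using eq_cons_of_head?_aux hv'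
      rw [hp2]
      simp [pOne, hl]
    · simp [pOne, hl]

lemma pMul_one_right (x : PathOn V → ℝ≥0∞) : pMul x pOne = x := by
  funext π
  apply le_antisymm
  · have hne := π.2.1
    have hmem : (x π + pOne (V := V) ⟨[π.1.getLast hne], by simp⟩) ∈
        {c | ∃ π₁ π₂ : PathOn V, IsSplit π.1 π₁.1 π₂.1 ∧ c = x π₁ + pOne π₂} := by
      refine ⟨π, ⟨[π.1.getLast hne], by simp⟩, ⟨hne, by simp, ?_, by simp⟩, rfl⟩
      simp [List.getLast?_eq_getLast hne]
    refine le_trans (sInf_le hmem) ?_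
    simp [pOne]
  · apply le_sInf
    rintro c ⟨p₁, p₂, ⟨h1, h2, h3, h4⟩, rfl⟩
    by_cases hl : p₂.1.length = 1
    · obtain ⟨v, hv⟩ := List.length_eq_one_iff.mp hl
      have hp1 : p₁ = π := by
        apply Subtype.ext
        rw [h4, hv]
        simp
      rw [hp1]
      simp [pOne, hl]
    · simp [pOne, hl]

end Aux

/-- The all-paths operations form a semiring on functions `P → ℝ≥0∞`. -/
theorem allPaths_semiring {V : Type*} [Fintype V] :
    (∀ x y z : PathOn V → ℝ≥0∞, pAdd (pAdd x y) z = pAdd x (pAdd y z)) ∧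
    (∀ x y : PathOn V → ℝ≥0∞, pAdd x y = pAdd y x) ∧
    (∀ x : PathOn V → ℝ≥0∞, pAdd x pZero = x) ∧
    (∀ x : PathOn V → ℝ≥0∞, pAdd pZero x = x) ∧
    (∀ x y z : PathOn V → ℝ≥0∞, pMul (pMul x y) z = pMul x (pMul y z)) ∧
    (∀ x : PathOn V → ℝ≥0∞, pMul pOne x = x) ∧
    (∀ x : PathOn V → ℝ≥0∞, pMul x pOne = x) ∧
    (∀ x y z : PathOn V → ℝ≥0∞, pMul x (pAdd y z) = pAdd (pMul x y) (pMul x z)) ∧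
    (∀ x y z : PathOn V → ℝ≥0∞, pMul (pAdd y z) x = pAdd (pMul y x) (pMul z x)) ∧
    (∀ x : PathOn V → ℝ≥0∞, pMul pZero x = pZero) ∧
    (∀ x : PathOn V → ℝ≥0∞, pMul x pZero = pZero) := by
  refine ⟨?_, ?_, ?_, ?_, ?_, ?_, ?_, ?_, ?_, ?_, ?_⟩
  · intro x y z; funext π; simp [pAdd, min_assoc]
  · intro x y; funext π; simp [pAdd, min_comm]
  · intro x; funext π; simp [pAdd, pZero]
  · intro x; funext π; simp [pAdd, pZero]
  · exact pMul_assoc_aux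
  · exact pMul_one_left
  · exact pMul_one_right
  · intro x y z
    funext π
    apply le_antisymm
    · apply le_min <;>
      · apply le_sInf
        rintro c ⟨p₁, p₂, hs, rfl⟩
        refine sInf_le_of_le ⟨p₁, p₂, hs, rfl⟩ ?_
        simp only [pAdd]
        gcongr
        first
          | exact min_le_left _ _
          | exact min_le_right _ _
    · apply le_sInf
      rintro c ⟨p₁, p₂, hs, rfl⟩
      simp only [pAdd]
      rcases le_total (y p₂) (z p₂) with h | h
      · calc min (pMul x y π) (pMul x z π) ≤ pMul x y π := min_le_left _ _
          _ ≤ x p₁ + y p₂ := sInf_le ⟨p₁, p₂, hs, rfl⟩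
          _ = x p₁ + min (y p₂) (z p₂) := by rw [min_eq_left h]
      · calc min (pMul x y π) (pMul x z π) ≤ pMul x z π := min_le_right _ _
          _ ≤ x p₁ + z p₂ := sInf_le ⟨p₁, p₂, hs, rfl⟩
          _ = x p₁ + min (y p₂) (z p₂) := by rw [min_eq_right h]
  · intro x y z
    funext π
    apply le_antisymm
    · apply le_min <;>
      · apply le_sInf
        rintro c ⟨p₁, p₂, hs, rfl⟩
        refine sInf_le_of_le ⟨p₁, p₂, hs, rfl⟩ ?_
        simp only [pAdd]
        gcongr
        first
          | exact min_le_left _ _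
          | exact min_le_right _ _
    · apply le_sInf
      rintro c ⟨p₁, p₂, hs, rfl⟩
      simp only [pAdd]
      rcases le_total (y p₁) (z p₁) with h | h
      · calc min (pMul y x π) (pMul z x π) ≤ pMul y x π := min_le_left _ _
          _ ≤ y p₁ + x p₂ := sInf_le ⟨p₁, p₂, hs, rfl⟩
          _ = min (y p₁) (z p₁) + x p₂ := by rw [min_eq_left h]
      · calc min (pMul y x π) (pMul z x π) ≤ pMul z x π := min_le_right _ _
          _ ≤ z p₁ + x p₂ := sInf_le ⟨p₁, p₂, hs, rfl⟩
          _ = min (y p₁) (z p₁) + x p₂ := by rw [min_eq_right h]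
  · intro x
    funext π
    show sInf _ = ⊤
    rw [sInf_eq_top]
    rintro a ⟨p₁, p₂, hs, rfl⟩
    simp [pZero]
  · intro x
    funext π
    show sInf _ = ⊤
    rw [sInf_eq_top]
    rintro a ⟨p₁, p₂, hs, rfl⟩
    simp [pZero]
end

section
/- Let λ ∈ ℕ and let v, w ∈ V satisfy level(v) ≥ λ and level(w) ≥ λ. Then for every min-hop shortest walk p from v to w in H, every consecutive pair (a, b) of vertices in p satisfies min(level(a), level(b)) ≥ λ; that is, all edges of p have level at least λ. -/
open scoped ENNReal

variable {V : Type*}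

/-- Weight of a walk: sum of the edge weights over consecutive pairs of vertices. -/
noncomputable def walkWeight (w : V → V → ℝ≥0∞) : List V → ℝ≥0∞
  | [] => 0
  | [_] => 0
  | a :: b :: l => w a b + walkWeight w (b :: l)

/-- A walk from `u` to `v`: a nonempty list starting at `u` and ending at `v`. -/
def IsWalk (l : List V) (u v : V) : Prop :=
  l ≠ [] ∧ l.head? = some u ∧ l.getLast? = some v

/-- Edge weights of the simulated graph `H`:
`w_H(v,w) = (1+ε)^(Λ - min(level v, level w)) · dd v w`. -/
noncomputable def wH (ε : ℝ) (Λ : ℕ) (level : V → ℕ) (dd : V → V → ℝ≥0∞)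
    (v w : V) : ℝ≥0∞ :=
  ENNReal.ofReal (1 + ε) ^ (Λ - min (level v) (level w)) * dd v w

/-- Distance in the simulated graph `H`. -/
noncomputable def distH (ε : ℝ) (Λ : ℕ) (level : V → ℕ) (dd : V → V → ℝ≥0∞)
    (v w : V) : ℝ≥0∞ :=
  sInf {c | ∃ l : List V, IsWalk l v w ∧ walkWeight (wH ε Λ level dd) l = c}

/-- Every nonempty list has an element with minimal `f`-value. -/
lemma list_exists_min_image {α : Type*} (f : α → ℕ) (l : List α) (h : l ≠ []) :
    ∃ x ∈ l, ∀ y ∈ l, f x ≤ f y := by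
  induction l with
  | nil => exact absurd rfl h
  | cons a t ih =>
    rcases eq_or_ne t [] with rfl | ht
    · exact ⟨a, by simp, by simp⟩
    · obtain ⟨x, hx, hmin⟩ := ih ht
      rcases le_total (f a) (f x) with hle | hle
      · refine ⟨a, by simp, ?_⟩
        intro y hy
        rcases List.mem_cons.1 hy with rfl | hy
        · exact le_rfl
        · exact hle.trans (hmin y hy)
      · refine ⟨x, List.mem_cons_of_mem _ hx, ?_⟩
        intro y hy
        rcases List.mem_cons.1 hy with rfl | hy
        · exact hle
        · exact hmin y hy

/-- Weight of a concatenation of two nonempty walks. -/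
lemma walkWeight_append (w : V → V → ℝ≥0∞) :
    ∀ (l1 l2 : List V) (h1 : l1 ≠ []) (h2 : l2 ≠ []),
    walkWeight w (l1 ++ l2)
      = walkWeight w l1 + w (l1.getLast h1) (l2.head h2) + walkWeight w l2
  | [], _, h1, _ => absurd rfl h1
  | [a], l2, _, h2 => by
      obtain ⟨c, l2', rfl⟩ := List.exists_cons_of_ne_nil h2
      simp [walkWeight]
  | a :: a' :: t, l2, _, h2 => by
      have ih := walkWeight_append w (a' :: t) l2 (by simp) h2
      simp only [List.cons_append] at ih ⊢
      rw [walkWeight, walkWeight, ih, List.getLast_cons (by simp : a' :: t ≠ [])]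
      ring

/-- Lower bound on the weight of a chain of level-`m` vertices together with its
two boundary edges, in terms of the distance `D` between the boundary vertices. -/
lemma chain_lower_bound (ε : ℝ) (Λ : ℕ) (level : V → ℕ) (D dd : V → V → ℝ≥0∞)
    (htri : ∀ u v w, D u w ≤ D u v + D v w)
    (hlow : ∀ v w, D v w ≤ dd v w) (m : ℕ) :
    ∀ (t : List V) (x : V), (∀ y ∈ x :: t, level y = m) →
    ∀ a b : V, m ≤ level a → m ≤ level b →
    ENNReal.ofReal (1 + ε) ^ (Λ - m) * D a b ≤
      wH ε Λ level dd a x + walkWeight (wH ε Λ level dd) (x :: t)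
        + wH ε Λ level dd ((x :: t).getLast (by simp)) b := by
  intro t
  induction t with
  | nil =>
    intro x hall a b ha hb
    have hx : level x = m := hall x (by simp)
    have h1 : wH ε Λ level dd a x = ENNReal.ofReal (1 + ε) ^ (Λ - m) * dd a x := by
      rw [wH, hx, min_eq_right ha]
    have h2 : wH ε Λ level dd x b = ENNReal.ofReal (1 + ε) ^ (Λ - m) * dd x b := by
      rw [wH, hx, min_eq_left hb]
    have hgl : ([x] : List V).getLast (by simp) = x := rfl
    rw [hgl]
    calc ENNReal.ofReal (1 + ε) ^ (Λ - m) * D a b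
        ≤ ENNReal.ofReal (1 + ε) ^ (Λ - m) * (D a x + D x b) :=
          mul_le_mul_right (htri a x b) _
      _ = ENNReal.ofReal (1 + ε) ^ (Λ - m) * D a x
            + ENNReal.ofReal (1 + ε) ^ (Λ - m) * D x b := by rw [mul_add]
      _ ≤ wH ε Λ level dd a x + wH ε Λ level dd x b := by
          rw [h1, h2]
          exact add_le_add (mul_le_mul_right (hlow a x) _) (mul_le_mul_right (hlow x b) _)
      _ ≤ wH ε Λ level dd a x + walkWeight (wH ε Λ level dd) [x] + wH ε Λ level dd x b := by
          simp [walkWeight]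
  | cons y t' ih =>
    intro x hall a b ha hb
    have hx : level x = m := hall x (by simp)
    have hall' : ∀ z ∈ y :: t', level z = m := fun z hz => hall z (List.mem_cons_of_mem _ hz)
    have hih := ih y hall' x b (le_of_eq hx.symm) hb
    have h1 : wH ε Λ level dd a x = ENNReal.ofReal (1 + ε) ^ (Λ - m) * dd a x := by
      rw [wH, hx, min_eq_right ha]
    have hgl : (x :: y :: t' : List V).getLast (by simp)
        = (y :: t' : List V).getLast (by simp) := List.getLast_cons (by simp)
    rw [hgl]
    have hww : walkWeight (wH ε Λ level dd) (x :: y :: t')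
        = wH ε Λ level dd x y + walkWeight (wH ε Λ level dd) (y :: t') := rfl
    calc ENNReal.ofReal (1 + ε) ^ (Λ - m) * D a b
        ≤ ENNReal.ofReal (1 + ε) ^ (Λ - m) * (D a x + D x b) :=
          mul_le_mul_right (htri a x b) _
      _ = ENNReal.ofReal (1 + ε) ^ (Λ - m) * D a x
            + ENNReal.ofReal (1 + ε) ^ (Λ - m) * D x b := by rw [mul_add]
      _ ≤ wH ε Λ level dd a x
            + (wH ε Λ level dd x y + walkWeight (wH ε Λ level dd) (y :: t')
              + wH ε Λ level dd ((y :: t' : List V).getLast (by simp)) b) := by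
          refine add_le_add ?_ hih
          rw [h1]
          exact mul_le_mul_right (hlow a x) _
      _ = wH ε Λ level dd a x + walkWeight (wH ε Λ level dd) (x :: y :: t')
            + wH ε Λ level dd ((y :: t' : List V).getLast (by simp)) b := by
          rw [hww]; ring

/-- All edges of a min-hop shortest walk between two vertices of level at least `λ`
have level at least `λ`. -/
theorem minHop_shortest_walk_level [Fintype V]
    (ε : ℝ) (hε : 0 ≤ ε) (Λ : ℕ) (level : V → ℕ) (hlevel : ∀ v, level v ≤ Λ)
    (D dd : V → V → ℝ≥0∞)
    (hDsymm : ∀ v w, D v w = D w v) (hddsymm : ∀ v w, dd v w = dd w v)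
    (hD0 : ∀ v, D v v = 0) (hdd0 : ∀ v, dd v v = 0)
    (htri : ∀ u v w, D u w ≤ D u v + D v w)
    (hlow : ∀ v w, D v w ≤ dd v w)
    (hhigh : ∀ v w, dd v w ≤ ENNReal.ofReal (1 + ε) * D v w)
    (lam : ℕ) (v w : V) (hv : lam ≤ level v) (hw : lam ≤ level w)
    (p : List V) (hwalk : IsWalk p v w)
    (hshort : walkWeight (wH ε Λ level dd) p = distH ε Λ level dd v w)
    (hminhop : ∀ q : List V, IsWalk q v w →
      walkWeight (wH ε Λ level dd) q = distH ε Λ level dd v w → p.length ≤ q.length) :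
    ∀ a b : V, (a, b) ∈ p.zip p.tail → lam ≤ min (level a) (level b) := by
  intro a0 b0 hmem
  by_contra hcon
  push_neg at hcon
  obtain ⟨ha0p, hb0t⟩ := List.of_mem_zip hmem
  have hb0p : b0 ∈ p := List.mem_of_mem_tail hb0t
  obtain ⟨hpne, hhead, hlast⟩ := hwalk
  obtain ⟨x₀, hx₀p, hx₀min⟩ := list_exists_min_image level p hpne
  set m := level x₀ with hm
  have hmlam : m < lam :=
    lt_of_le_of_lt (le_min (hx₀min a0 ha0p) (hx₀min b0 hb0p)) hcon
  have hmΛ : m < Λ := hmlam.trans_le (hv.trans (hlevel v))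
  set C := ENNReal.ofReal (1 + ε) with hC
  have hC1 : 1 ≤ C := ENNReal.one_le_ofReal.2 (by linarith)
  set wE := wH ε Λ level dd with hwE
  -- decompose p
  set P : V → Bool := fun x => decide (m < level x) with hP
  set p₁ := p.takeWhile P with hp₁def
  set d := p.dropWhile P with hddef
  have hpd : p₁ ++ d = p := List.takeWhile_append_dropWhile (p := P) (l := p)
  have hp₁lvl : ∀ x ∈ p₁, m < level x := by
    intro x hx
    have := List.mem_takeWhile_imp hx
    simpa [hP] using this
  have hdne : d ≠ [] := by
    have hx₀' : x₀ ∈ p₁ ++ d := hpd ▸ hx₀p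
    rcases List.mem_append.1 hx₀' with h | h
    · exact absurd (hp₁lvl x₀ h) (by simp [hm])
    · exact List.ne_nil_of_mem h
  set Q : V → Bool := fun x => decide (level x ≤ m) with hQ
  set run := d.takeWhile Q with hrundef
  set rest := d.dropWhile Q with hrestdef
  have hdrr : run ++ rest = d := List.takeWhile_append_dropWhile (p := Q) (l := d)
  have hdheadQ : Q (d.head hdne) = true := by
    have := List.head_dropWhile_not P (l := p) hdne
    simp only [hP, decide_eq_false_iff_not, not_lt] at this
    simp only [hQ, decide_eq_true_eq]; exact this
  obtain ⟨c, d', hd'⟩ := List.exists_cons_of_ne_nil hdne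
  have hcd : c = d.head hdne := by
    have h1 : d.head? = some c := by rw [hd']; rfl
    have h2 : d.head? = some (d.head hdne) := List.head?_eq_head hdne
    exact Option.some_injective _ (h1.symm.trans h2)
  have hcQ : Q c = true := by rw [hcd]; exact hdheadQ
  have hrunne : run ≠ [] := by
    rw [hrundef, hd', List.takeWhile_cons_of_pos hcQ]
    simp
  have hp₁ne : p₁ ≠ [] := by
    intro h0
    have hpd' : p = d := by rw [← hpd, h0]; rfl
    have hcv : c = v := by
      have : p.head? = some c := by rw [hpd', hd']; rfl
      rw [hhead] at this; exact (Option.some_injective _ this).symm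
    have : level c ≤ m := by simpa [hQ] using hcQ
    rw [hcv] at this
    omega
  -- last element of p is the last element of d
  have hlastd : d.getLast? = some w := by
    rw [← hlast, ← hpd, List.getLast?_append_of_ne_nil _ hdne]
  have hwd : w ∈ d := by
    obtain ⟨h', hw'⟩ := List.mem_getLast?_eq_getLast (by simpa using hlastd)
    rw [hw']; exact List.getLast_mem h'
  have hrestne : rest ≠ [] := by
    intro h0
    have hdrun : d = run := by rw [← hdrr, h0]; simp
    have : Q w = true := List.mem_takeWhile_imp (by rw [← hrundef, ← hdrun]; exact hwd)
    have : level w ≤ m := by simpa [hQ] using this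
    omega
  -- key vertices
  set a := p₁.getLast hp₁ne with ha
  set b := rest.head hrestne with hb
  have hla : m < level a := hp₁lvl a (List.getLast_mem hp₁ne)
  have hlb : m < level b := by
    have := List.head_dropWhile_not Q (l := d) hrestne
    simp only [hQ, decide_eq_false_iff_not, not_le] at this
    exact this
  -- run levels
  have hrunlvl : ∀ y ∈ run, level y = m := by
    intro y hy
    have h1 : level y ≤ m := by
      have := List.mem_takeWhile_imp hy
      simpa [hQ] using this
    have h2 : m ≤ level y := by
      have hyp : y ∈ p := by
        rw [← hpd]
        exact List.mem_append_right _ ((List.takeWhile_sublist Q).subset hy)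
      exact hx₀min y hyp
    omega
  obtain ⟨rx, rt, hrun'⟩ := List.exists_cons_of_ne_nil hrunne
  -- the shortcut walk
  set q := p₁ ++ rest with hq
  have hqwalk : IsWalk q v w := by
    refine ⟨by simp [hq, hp₁ne], ?_, ?_⟩
    · rw [hq, List.head?_append_of_ne_nil _ hp₁ne, ← List.head?_append_of_ne_nil p₁ (l₂ := d) hp₁ne, hpd, hhead]
    · rw [hq, List.getLast?_append_of_ne_nil _ hrestne, ← List.getLast?_append_of_ne_nil run (l₂ := rest) hrestne, hdrr, hlastd]
  -- weight computations
  have hdne' : run ++ rest ≠ [] := by rw [hdrr]; exact hdne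
  have hwp : walkWeight wE p
      = walkWeight wE p₁ + wE a ((run ++ rest).head hdne') + walkWeight wE (run ++ rest) := by
    conv_lhs => rw [← hpd, ← hdrr]
    exact walkWeight_append wE p₁ (run ++ rest) hp₁ne hdne'
  have hwrr : walkWeight wE (run ++ rest)
      = walkWeight wE run + wE (run.getLast hrunne) b + walkWeight wE rest :=
    walkWeight_append wE run rest hrunne hrestne
  have hheadrr : (run ++ rest).head hdne' = rx := by
    have h1 : (run ++ rest).head? = some ((run ++ rest).head hdne') :=
      List.head?_eq_head hdne'
    have h2 : (run ++ rest).head? = some rx := by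
      rw [List.head?_append_of_ne_nil _ hrunne, hrun']; rfl
    exact Option.some_injective _ (h1.symm.trans h2)
  have hwq : walkWeight wE q
      = walkWeight wE p₁ + wE a b + walkWeight wE rest :=
    walkWeight_append wE p₁ rest hp₁ne hrestne
  -- the key inequality : wE a b ≤ weight of the chunk through the run
  have hkey : wE a b ≤ wE a rx + walkWeight wE run + wE (run.getLast hrunne) b := by
    have hstep1 : wE a b ≤ C ^ (Λ - m) * D a b := by
      have hpow : C ^ (Λ - min (level a) (level b)) ≤ C ^ (Λ - (m + 1)) :=
        pow_le_pow_right₀ hC1 (by omega)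
      calc wE a b = C ^ (Λ - min (level a) (level b)) * dd a b := rfl
        _ ≤ C ^ (Λ - (m + 1)) * dd a b := mul_le_mul_left hpow _
        _ ≤ C ^ (Λ - (m + 1)) * (C * D a b) := mul_le_mul_right (hhigh a b) _
        _ = C ^ (Λ - (m + 1) + 1) * D a b := by rw [pow_succ, mul_assoc]
        _ = C ^ (Λ - m) * D a b := by congr 2; omega
    have hrall : ∀ y ∈ rx :: rt, level y = m := by rw [← hrun']; exact hrunlvl
    have hstep2 := chain_lower_bound ε Λ level D dd htri hlow m rt rx hrall a b
      (le_of_lt hla) (le_of_lt hlb)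
    have hgl : (rx :: rt).getLast (by simp) = run.getLast hrunne := by
      congr 1; exact hrun'.symm
    rw [hgl] at hstep2
    have h5 : walkWeight wE run = walkWeight wE (rx :: rt) := by rw [hrun']
    rw [h5]
    exact hstep1.trans hstep2
  -- q is at least as light as p
  have hqle : walkWeight wE q ≤ walkWeight wE p := by
    rw [hwq, hwp, hwrr, hheadrr]
    calc walkWeight wE p₁ + wE a b + walkWeight wE rest
        ≤ walkWeight wE p₁ + (wE a rx + walkWeight wE run + wE (run.getLast hrunne) b)
            + walkWeight wE rest := by
          exact add_le_add (add_le_add le_rfl hkey) le_rfl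
      _ = walkWeight wE p₁ + wE a rx
            + (walkWeight wE run + wE (run.getLast hrunne) b + walkWeight wE rest) := by ring
  -- q is also a shortest walk
  have hdistle : distH ε Λ level dd v w ≤ walkWeight wE q :=
    sInf_le ⟨q, hqwalk, rfl⟩
  have hqshort : walkWeight wE q = distH ε Λ level dd v w :=
    le_antisymm (hqle.trans_eq hshort) hdistle
  have hlen := hminhop q hqwalk hqshort
  -- but q is strictly shorter : contradiction
  have hlp : p.length = p₁.length + (run.length + rest.length) := by
    rw [← hpd, ← hdrr]; simp
  have hlq : q.length = p₁.length + rest.length := by simp [hq]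
  have hrunlen : 0 < run.length := List.length_pos_iff.2 hrunne
  omega
end

section
/- For all v, w ∈ V, the distances in the simulated graph H satisfy D(v,w) ≤ dist_H(v,w) ≤ (1+ε̂)^{Λ+1} · D(v,w). -/
open scoped ENNReal

variable {V : Type*}

lemma walk_lower {V : Type*} (w D : V → V → ℝ≥0∞)
    (hD0 : ∀ v, D v v = 0) (htri : ∀ u v w, D u w ≤ D u v + D v w)
    (hle : ∀ a b, D a b ≤ w a b) :
    ∀ (l : List V) (a b : V), l.head? = some a → l.getLast? = some b →
      D a b ≤ walkWeight w l := by
  intro l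
  induction l with
  | nil => intro a b h; simp at h
  | cons x t ih =>
    intro a b ha hb
    simp at ha; subst ha
    match t, hb with
    | [], hb =>
      simp [List.getLast?] at hb
      subst hb
      simp [walkWeight, hD0]
    | y :: t, hb =>
      have hb' : (y :: t).getLast? = some b := by
        rwa [List.getLast?_cons_cons] at hb
      calc D x b ≤ D x y + D y b := htri x y b
        _ ≤ w x y + walkWeight w (y :: t) :=
          add_le_add (hle x y) (ih y b rfl hb')
        _ = walkWeight w (x :: y :: t) := rfl

/-- The distances in the simulated graph `H` satisfy
`D(v,w) ≤ dist_H(v,w) ≤ (1+ε)^(Λ+1) · D(v,w)`. -/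
theorem distH_approx [Fintype V]
    (ε : ℝ) (hε : 0 ≤ ε) (Λ : ℕ) (level : V → ℕ) (hlevel : ∀ v, level v ≤ Λ)
    (D dd : V → V → ℝ≥0∞)
    (hDsymm : ∀ v w, D v w = D w v) (hddsymm : ∀ v w, dd v w = dd w v)
    (hD0 : ∀ v, D v v = 0) (hdd0 : ∀ v, dd v v = 0)
    (htri : ∀ u v w, D u w ≤ D u v + D v w)
    (hlow : ∀ v w, D v w ≤ dd v w)
    (hhigh : ∀ v w, dd v w ≤ ENNReal.ofReal (1 + ε) * D v w) :
    ∀ v w : V, D v w ≤ distH ε Λ level dd v w ∧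
      distH ε Λ level dd v w ≤ ENNReal.ofReal (1 + ε) ^ (Λ + 1) * D v w := by
  intro v w
  set c := ENNReal.ofReal (1 + ε) with hc
  have hc1 : (1:ℝ≥0∞) ≤ c := ENNReal.one_le_ofReal.2 (by linarith)
  constructor
  · apply le_sInf
    rintro x ⟨l, ⟨hne, ha, hb⟩, rfl⟩
    refine walk_lower _ D hD0 htri ?_ l v w ha hb
    intro a b
    calc D a b ≤ dd a b := hlow a b
      _ = 1 * dd a b := (one_mul _).symm
      _ ≤ c ^ (Λ - min (level a) (level b)) * dd a b :=
        mul_le_mul_left (one_le_pow_of_one_le' hc1 _) _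
  · have hmem : walkWeight (wH ε Λ level dd) [v, w] ∈
        {x | ∃ l : List V, IsWalk l v w ∧ walkWeight (wH ε Λ level dd) l = x} :=
      ⟨[v, w], ⟨by simp, rfl, rfl⟩, rfl⟩
    refine (sInf_le hmem).trans ?_
    show wH ε Λ level dd v w + walkWeight (wH ε Λ level dd) [w] ≤ _
    have h0 : walkWeight (wH ε Λ level dd) [w] = 0 := rfl
    rw [h0, add_zero, wH]
    calc c ^ (Λ - min (level v) (level w)) * dd v w
        ≤ c ^ Λ * (c * D v w) :=
          mul_le_mul' (pow_le_pow_right' hc1 (Nat.sub_le _ _)) (hhigh v w)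
      _ = c ^ (Λ + 1) * D v w := by ring
end

section
/- The matrix A_H decomposes as A_H = ⊕_{λ=0}^{Λ} P_λ (A_λ)^d P_λ, i.e., for all v, w ∈ V, A_H(v,w) = min_{0 ≤ λ ≤ Λ} (P_λ · (A_λ)^d · P_λ)(v,w), where all products and powers are min-plus matrix products. -/
open scoped ENNReal

variable {V : Type*}

/-- The min-plus matrix product: `(A B)_{vw} = min_u (A_{vu} + B_{uw})`. -/
noncomputable def mpMul [Fintype V] (A B : V → V → ℝ≥0∞) : V → V → ℝ≥0∞ :=
  fun v w => ⨅ u, A v u + B u w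

/-- The min-plus identity matrix: `0` on the diagonal, `∞` elsewhere. -/
noncomputable def mpId [DecidableEq V] : V → V → ℝ≥0∞ :=
  fun v w => if v = w then 0 else ⊤

/-- Min-plus matrix powers. -/
noncomputable def mpPow [Fintype V] [DecidableEq V] (A : V → V → ℝ≥0∞) :
    ℕ → V → V → ℝ≥0∞
  | 0 => mpId
  | h + 1 => mpMul A (mpPow A h)

/-- The projection matrix `P_λ`: `0` on diagonal entries of vertices of level at least
`λ`, and `∞` everywhere else. -/
noncomputable def projMat [DecidableEq V] (level : V → ℕ) (lam : ℕ) : V → V → ℝ≥0∞ :=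
  fun v w => if v = w ∧ lam ≤ level v then 0 else ⊤

/-- The matrix `A_λ`: the entries of `A_G` scaled by `(1+ε)^(Λ-λ)`. -/
noncomputable def scaledMat (ε : ℝ) (Λ lam : ℕ) (AG : V → V → ℝ≥0∞) : V → V → ℝ≥0∞ :=
  fun v w => ENNReal.ofReal (1 + ε) ^ (Λ - lam) * AG v w

lemma scaled_pow [Fintype V] [DecidableEq V] (c : ℝ≥0∞) (hc0 : c ≠ 0) (hct : c ≠ ⊤)
    (AG : V → V → ℝ≥0∞) (d : ℕ) (v w : V) :
    mpPow (fun a b => c * AG a b) d v w = c * mpPow AG d v w := by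
  induction d generalizing v w with
  | zero =>
    simp only [mpPow, mpId]
    split
    · simp
    · rw [ENNReal.mul_top hc0]
  | succ n ih =>
    have : Nonempty V := ⟨v⟩
    simp only [mpPow, mpMul]
    rw [ENNReal.mul_iInf (by simp [hct])]
    refine iInf_congr fun u => ?_
    rw [ih, mul_add]

lemma projMul [Fintype V] [DecidableEq V] (level : V → ℕ) (lam : ℕ)
    (B : V → V → ℝ≥0∞) (v w : V) :
    mpMul (projMat level lam) B v w = if lam ≤ level v then B v w else ⊤ := by
  simp only [mpMul, projMat]
  split
  · rename_i h
    refine le_antisymm ?_ (le_iInf fun u => ?_)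
    · refine iInf_le_of_le v ?_
      simp [h]
    · by_cases hu : v = u
      · subst hu; simp [h]
      · simp [hu]
  · rename_i h
    refine le_antisymm le_top (le_iInf fun u => ?_)
    have : ¬ (v = u ∧ lam ≤ level v) := fun ⟨_, h2⟩ => h h2
    simp [this]

lemma mulProj [Fintype V] [DecidableEq V] (level : V → ℕ) (lam : ℕ)
    (B : V → V → ℝ≥0∞) (v w : V) :
    mpMul B (projMat level lam) v w = if lam ≤ level w then B v w else ⊤ := by
  simp only [mpMul, projMat]
  split
  · rename_i h
    refine le_antisymm ?_ (le_iInf fun u => ?_)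
    · refine iInf_le_of_le w ?_
      simp [h]
    · by_cases hu : u = w
      · subst hu; simp [h]
      · simp [hu]
  · rename_i h
    refine le_antisymm le_top (le_iInf fun u => ?_)
    have : ¬ (u = w ∧ lam ≤ level u) := fun ⟨h1, h2⟩ => h (h1 ▸ h2)
    simp [this]

/-- The adjacency matrix of the simulated graph `H` decomposes as
`A_H = ⊕_{λ=0}^{Λ} P_λ (A_λ)^d P_λ` under min-plus matrix products. -/
theorem AH_decomposition [Fintype V] [DecidableEq V]
    (ε : ℝ) (hε : 0 ≤ ε) (Λ d : ℕ) (level : V → ℕ) (hlevel : ∀ v, level v ≤ Λ)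
    (AG : V → V → ℝ≥0∞) (hAG : ∀ v, AG v v = 0) :
    ∀ v w : V,
      ENNReal.ofReal (1 + ε) ^ (Λ - min (level v) (level w)) * mpPow AG d v w =
      ⨅ lam ∈ Finset.range (Λ + 1),
        mpMul (mpMul (projMat level lam) (mpPow (scaledMat ε Λ lam AG) d))
          (projMat level lam) v w := by
  intro v w
  have h1 : (1:ℝ≥0∞) ≤ ENNReal.ofReal (1 + ε) := by
    rw [ENNReal.one_le_ofReal]; linarith
  have hc0 : ∀ k : ℕ, (ENNReal.ofReal (1 + ε)) ^ k ≠ 0 :=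
    fun k => pow_ne_zero k (by intro h; rw [h] at h1; exact (not_le.mpr zero_lt_one) h1)
  have hct : ∀ k : ℕ, (ENNReal.ofReal (1 + ε)) ^ k ≠ ⊤ :=
    fun k => ENNReal.pow_ne_top ENNReal.ofReal_ne_top
  have key : ∀ lam,
      mpMul (mpMul (projMat level lam) (mpPow (scaledMat ε Λ lam AG) d))
          (projMat level lam) v w =
      if lam ≤ min (level v) (level w) then
        ENNReal.ofReal (1 + ε) ^ (Λ - lam) * mpPow AG d v w else ⊤ := by
    intro lam
    rw [mulProj, projMul]
    have hs : mpPow (scaledMat ε Λ lam AG) d v w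
        = ENNReal.ofReal (1 + ε) ^ (Λ - lam) * mpPow AG d v w :=
      scaled_pow _ (hc0 _) (hct _) AG d v w
    by_cases hv : lam ≤ level v <;> by_cases hw : lam ≤ level w <;>
      simp [hv, hw, hs, le_min_iff]
  simp only [key]
  set m := min (level v) (level w) with hm
  have hmΛ : m ≤ Λ := le_trans (min_le_left _ _) (hlevel v)
  refine le_antisymm ?_ ?_
  · refine le_iInf fun lam => le_iInf fun _ => ?_
    by_cases hlm : lam ≤ m
    · simp only [hlm, if_pos]
      gcongr
    · simp [hlm]
  · refine iInf_le_of_le m (iInf_le_of_le ?_ ?_)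
    · simpa [Finset.mem_range] using Nat.lt_succ_of_le hmΛ
    · simp
end

section
/- For every x : V → ℝ≥0∞, every v ∈ V, and every s ∈ ℝ≥0∞: there exists w < v with x_w ≤ s if and only if there exists w < v with r(x)_w ≤ s. -/
open scoped ENNReal Classical

variable {V : Type*}

/-- The LE-list filter: `r(x)_v = ∞` if some `w < v` has `x_w ≤ x_v`, else `x_v`. -/
noncomputable def leFilter [LinearOrder V] (x : V → ℝ≥0∞) (v : V) : ℝ≥0∞ :=
  if ∃ w, w < v ∧ x w ≤ x v then ⊤ else x v

/-- There is `w < v` with `x_w ≤ s` iff there is `w < v` with `r(x)_w ≤ s`. -/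
theorem leFilter_domination [Fintype V] [LinearOrder V]
    (x : V → ℝ≥0∞) (v : V) (s : ℝ≥0∞) :
    (∃ w, w < v ∧ x w ≤ s) ↔ (∃ w, w < v ∧ leFilter x w ≤ s) := by
  constructor
  · rintro ⟨w, hwv, hws⟩
    set S : Finset V := Finset.univ.filter (fun w => w < v ∧ x w ≤ s) with hS
    have hwS : w ∈ S := by simp [hS, hwv, hws]
    obtain ⟨w0, hw0S, hw0min⟩ := S.exists_min_image x ⟨w, hwS⟩
    set S' : Finset V := S.filter (fun u => x u = x w0) with hS'
    have hne : S'.Nonempty := ⟨w0, by simp [hS', hw0S]⟩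
    set m := S'.min' hne with hm
    have hmS' : m ∈ S' := S'.min'_mem hne
    have hmS : m ∈ S := (Finset.mem_filter.mp hmS').1
    have hmx : x m = x w0 := (Finset.mem_filter.mp hmS').2
    have hmv : m < v := (Finset.mem_filter.mp hmS).2.1
    have hms : x m ≤ s := (Finset.mem_filter.mp hmS).2.2
    refine ⟨m, hmv, ?_⟩
    have : ¬ ∃ u, u < m ∧ x u ≤ x m := by
      rintro ⟨u, hum, hux⟩
      have huS : u ∈ S := by
        simp only [hS, Finset.mem_filter, Finset.mem_univ, true_and]
        exact ⟨hum.trans hmv, hux.trans hms⟩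
      have h1 : x w0 ≤ x u := hw0min u huS
      have h2 : x u = x w0 := le_antisymm (hux.trans_eq hmx) h1
      have huS' : u ∈ S' := by simp [hS', huS, h2]
      exact absurd (S'.min'_le u huS') (not_le.mpr hum)
    rw [leFilter, if_neg this]
    exact hms
  · rintro ⟨w, hwv, hws⟩
    rw [leFilter] at hws
    split_ifs at hws with h
    · exact ⟨w, hwv, le_top.trans hws⟩
    · exact ⟨w, hwv, hws⟩
end

section
/- For all x, y : V → ℝ≥0∞, filtering commutes with pointwise minimum in the sense that r(x ⊕ y) = r(r(x) ⊕ r(y)), where (x ⊕ y)_v = min(x_v, y_v). Consequently, if r(x) = r(x') and r(y) = r(y'), then r(x ⊕ y) = r(x' ⊕ y'). -/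
open scoped ENNReal Classical

variable {V : Type*}

lemma le_leFilter [LinearOrder V] (x : V → ℝ≥0∞) (v : V) : x v ≤ leFilter x v := by
  unfold leFilter; split <;> simp

lemma leFilter_exists [Fintype V] [LinearOrder V] (x : V → ℝ≥0∞) (w : V) :
    ∃ u, u ≤ w ∧ leFilter x u = x u ∧ x u ≤ x w := by
  induction w using WellFoundedLT.induction with
  | ind w ih =>
    by_cases h : ∃ u, u < w ∧ x u ≤ x w
    · obtain ⟨u', hu', hx⟩ := h
      obtain ⟨u, hle, hf, hxle⟩ := ih u' hu'
      exact ⟨u, hle.trans hu'.le, hf, hxle.trans hx⟩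
    · exact ⟨w, le_refl w, by simp [leFilter, h], le_refl _⟩

lemma leFilter_min_key [Fintype V] [LinearOrder V] (x y : V → ℝ≥0∞) :
    leFilter (fun v => min (x v) (y v)) =
      leFilter (fun v => min (leFilter x v) (leFilter y v)) := by
  set f := leFilter x with hf
  set g := leFilter y with hg
  set m : V → ℝ≥0∞ := fun v => min (x v) (y v) with hm
  set M : V → ℝ≥0∞ := fun v => min (f v) (g v) with hM
  have hmM : ∀ v, m v ≤ M v := fun v =>
    min_le_min (le_leFilter x v) (le_leFilter y v)
  have hftop : ∀ v, f v ≠ x v → ∃ u, u < v ∧ x u ≤ x v := by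
    intro v hv
    by_contra h
    exact hv (by simp [hf, leFilter, h])
  have hgtop : ∀ v, g v ≠ y v → ∃ u, u < v ∧ y u ≤ y v := by
    intro v hv
    by_contra h
    exact hv (by simp [hg, leFilter, h])
  funext v
  by_cases h1 : ∃ w, w < v ∧ m w ≤ m v
  · -- both sides are ⊤
    have h2 : ∃ w, w < v ∧ M w ≤ M v := by
      obtain ⟨w, hwv, hw⟩ := h1
      rcases le_total (x w) (y w) with hxy | hxy
      · obtain ⟨u, hu, hfu, hxu⟩ := leFilter_exists x w
        refine ⟨u, lt_of_le_of_lt hu hwv, ?_⟩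
        calc M u ≤ f u := min_le_left _ _
          _ = x u := hfu
          _ ≤ x w := hxu
          _ = m w := (min_eq_left hxy).symm
          _ ≤ m v := hw
          _ ≤ M v := hmM v
      · obtain ⟨u, hu, hgu, hyu⟩ := leFilter_exists y w
        refine ⟨u, lt_of_le_of_lt hu hwv, ?_⟩
        calc M u ≤ g u := min_le_right _ _
          _ = y u := hgu
          _ ≤ y w := hyu
          _ = m w := (min_eq_right hxy).symm
          _ ≤ m v := hw
          _ ≤ M v := hmM v
    simp only [leFilter, h1, h2, if_true]
  · -- no filtering at v for m; show M v = m v and no filtering for M either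
    have hMv : M v = m v := by
      by_contra hne
      have hlt : m v < M v := lt_of_le_of_ne (hmM v) (Ne.symm hne)
      rcases le_total (x v) (y v) with hxy | hxy
      · have hmv : m v = x v := min_eq_left hxy
        have : f v ≠ x v := by
          intro hfv
          exact absurd (le_trans (min_le_left (f v) (g v)) (le_of_eq hfv))
            (not_le.mpr (hmv ▸ hlt))
        obtain ⟨u, hu, hxu⟩ := hftop v this
        exact h1 ⟨u, hu, le_trans (min_le_left _ _) (hmv ▸ hxu)⟩
      · have hmv : m v = y v := min_eq_right hxy
        have : g v ≠ y v := by
          intro hgv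
          exact absurd (le_trans (min_le_right (f v) (g v)) (le_of_eq hgv))
            (not_le.mpr (hmv ▸ hlt))
        obtain ⟨u, hu, hyu⟩ := hgtop v this
        exact h1 ⟨u, hu, le_trans (min_le_right _ _) (hmv ▸ hyu)⟩
    have h2 : ¬∃ w, w < v ∧ M w ≤ M v := by
      rintro ⟨w, hwv, hw⟩
      exact h1 ⟨w, hwv, le_trans (hmM w) (hw.trans (le_of_eq hMv))⟩
    simp only [leFilter, h1, h2, if_false]
    exact hMv.symm

/-- Filtering commutes with the pointwise minimum: `r(x ⊕ y) = r(r(x) ⊕ r(y))`.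
Consequently, the pointwise minimum respects the induced equivalence. -/
theorem leFilter_min [Fintype V] [LinearOrder V] :
    (∀ x y : V → ℝ≥0∞,
      leFilter (fun v => min (x v) (y v)) =
        leFilter (fun v => min (leFilter x v) (leFilter y v))) ∧
    (∀ x x' y y' : V → ℝ≥0∞, leFilter x = leFilter x' → leFilter y = leFilter y' →
      leFilter (fun v => min (x v) (y v)) = leFilter (fun v => min (x' v) (y' v))) := by
  refine ⟨leFilter_min_key, ?_⟩
  intro x x' y y' hx hy
  rw [leFilter_min_key x y, leFilter_min_key x' y', hx, hy]
end

section
/- For all x, x' : V → ℝ≥0∞ with r(x) = r(x') and every s ∈ ℝ≥0∞, the uniformly translated vectors have equal filterings: r(v ↦ s + x_v) = r(v ↦ s + x'_v). -/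
open scoped ENNReal Classical

variable {V : Type*}

/-- If `r(x) = r(x')`, then for every `s` the uniformly translated vectors have equal
filterings: `r(v ↦ s + x_v) = r(v ↦ s + x'_v)`. -/
theorem leFilter_translate [Fintype V] [LinearOrder V]
    (x x' : V → ℝ≥0∞) (hxx' : leFilter x = leFilter x') (s : ℝ≥0∞) :
    leFilter (fun v => s + x v) = leFilter (fun v => s + x' v) := by
  by_cases hs : s = ⊤
  · subst hs
    funext v
    simp [leFilter, top_add]
  · have key : ∀ y y' : V → ℝ≥0∞, leFilter y = leFilter y' → ∀ v,
        (∃ w, w < v ∧ y w ≤ y v) → ∃ w, w < v ∧ y' w ≤ y' v := by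
      intro y y' h v hc
      obtain ⟨w, hw, hle⟩ := hc
      have hv : leFilter y v = ⊤ := by
        simp only [leFilter, if_pos (⟨w, hw, hle⟩ : ∃ w, w < v ∧ y w ≤ y v)]
      have hv' : leFilter y' v = ⊤ := by rw [← h]; exact hv
      by_cases hc' : ∃ w, w < v ∧ y' w ≤ y' v
      · exact hc'
      · have : y' v = ⊤ := by simpa [leFilter, if_neg hc'] using hv'
        exact ⟨w, hw, this ▸ le_top⟩
    have cond_iff : ∀ (y : V → ℝ≥0∞) v,
        (∃ w, w < v ∧ s + y w ≤ s + y v) ↔ ∃ w, w < v ∧ y w ≤ y v := by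
      intro y v
      constructor <;> rintro ⟨w, hw, hle⟩ <;>
        exact ⟨w, hw, by first
          | exact (ENNReal.add_le_add_iff_left hs).mp hle
          | exact (ENNReal.add_le_add_iff_left hs).mpr hle⟩
    funext v
    have h1 := key x x' hxx' v
    have h2 := key x' x hxx'.symm v
    simp only [leFilter, cond_iff]
    by_cases hc : ∃ w, w < v ∧ x w ≤ x v
    · rw [if_pos hc, if_pos (h1 hc)]
    · have hc' : ¬ ∃ w, w < v ∧ x' w ≤ x' v := fun h => hc (h2 h)
      rw [if_neg hc, if_neg hc']
      have := congrFun hxx' v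
      simp only [leFilter, if_neg hc, if_neg hc'] at this
      rw [this]
end

section
/- The expected number of indices surviving the filter equals the m-th harmonic number: E_σ[ |{v : r_σ(x)_v ≠ ∞}| ] = ∑_{i=1}^{m} 1/i. -/
open scoped ENNReal Classical
open MeasureTheory

instance (n : ℕ) : MeasurableSpace (Equiv.Perm (Fin n)) := ⊤

noncomputable def rPerm {n : ℕ} (σ : Equiv.Perm (Fin n)) (x : Fin n → ℝ≥0∞)
    (v : Fin n) : ℝ≥0∞ :=
  if ∃ w, σ w < σ v ∧ x w ≤ x v then ⊤ else x v

instance instMSC (n : ℕ) : MeasurableSingletonClass (Equiv.Perm (Fin n)) := ⟨fun _ => trivial⟩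

lemma count_min (n : ℕ) (S : Finset (Fin n)) (v : Fin n) (hv : v ∈ S) :
    (Finset.univ.filter (fun σ : Equiv.Perm (Fin n) => ∀ w ∈ S, σ v ≤ σ w)).card * S.card
      = Fintype.card (Equiv.Perm (Fin n)) := by
  classical
  set A : Fin n → Finset (Equiv.Perm (Fin n)) :=
    fun u => Finset.univ.filter (fun σ => ∀ w ∈ S, σ u ≤ σ w) with hA
  have hcover : (Finset.univ : Finset (Equiv.Perm (Fin n))) = S.biUnion A := by
    apply Finset.eq_of_subset_of_card_le ?_ (Finset.card_le_card (Finset.subset_univ _))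
    intro σ _
    obtain ⟨u, hu, hmin⟩ := S.exists_min_image (fun w => σ w) ⟨v, hv⟩
    exact Finset.mem_biUnion.2 ⟨u, hu, by simp [hA]; exact hmin⟩
  have hdisj : ∀ u ∈ S, ∀ u' ∈ S, u ≠ u' → Disjoint (A u) (A u') := by
    intro u hu u' hu' hne
    rw [Finset.disjoint_left]
    intro σ h1 h2
    simp only [hA, Finset.mem_filter] at h1 h2
    exact hne (σ.injective (le_antisymm (h1.2 u' hu') (h2.2 u hu)))
  have hcard : ∀ u ∈ S, (A u).card = (A v).card := by
    intro u hu
    apply Finset.card_bij (fun σ _ => σ * Equiv.swap u v)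
    · intro σ hσ
      simp only [hA, Finset.mem_filter, Finset.mem_univ, true_and] at hσ ⊢
      intro w hw
      have : (Equiv.swap u v) w ∈ S := by
        rcases eq_or_ne w u with rfl | h1
        · simpa using hv
        rcases eq_or_ne w v with rfl | h2
        · simpa using hu
        · rwa [Equiv.swap_apply_of_ne_of_ne h1 h2]
      simpa using hσ _ this
    · intro σ1 h1 σ2 h2 h
      exact mul_right_cancel h
    · intro σ hσ
      refine ⟨σ * Equiv.swap u v, ?_, by simp [mul_assoc]⟩
      simp only [hA, Finset.mem_filter, Finset.mem_univ, true_and] at hσ ⊢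
      intro w hw
      have : (Equiv.swap u v) w ∈ S := by
        rcases eq_or_ne w u with rfl | h1
        · simpa using hv
        rcases eq_or_ne w v with rfl | h2
        · simpa using hu
        · rwa [Equiv.swap_apply_of_ne_of_ne h1 h2]
      simpa using hσ _ this
  calc (A v).card * S.card = ∑ u ∈ S, (A u).card := by
        rw [Finset.sum_congr rfl hcard, Finset.sum_const, smul_eq_mul, mul_comm]
    _ = Fintype.card (Equiv.Perm (Fin n)) := by
        rw [← Finset.card_biUnion hdisj, ← hcover, Finset.card_univ]


/-- For a uniformly random permutation `σ`, the expected number of indices surviving the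
LE-list filter equals the `m`-th harmonic number, where `m` is the number of
non-`∞` entries. -/
theorem expected_survivors_eq_harmonic (n : ℕ) (x : Fin n → ℝ≥0∞)
    (hinj : Set.InjOn x {v | x v ≠ ⊤}) :
    ∫ σ, (({v | rPerm σ x v ≠ ⊤} : Set (Fin n)).ncard : ℝ)
        ∂((PMF.uniformOfFintype (Equiv.Perm (Fin n))).toMeasure) =
      ∑ i ∈ Finset.Icc 1 ({v : Fin n | x v ≠ ⊤}).ncard, (1 : ℝ) / i := by
  classical
  set N : ℕ := Fintype.card (Equiv.Perm (Fin n)) with hN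
  have hNpos : 0 < N := Fintype.card_pos
  set T : Finset (Fin n) := Finset.univ.filter (fun v => x v ≠ ⊤) with hT
  set S : Fin n → Finset (Fin n) := fun v => Finset.univ.filter (fun w => x w ≤ x v) with hS
  -- survive characterization
  have hsurv : ∀ σ : Equiv.Perm (Fin n), ∀ v : Fin n,
      rPerm σ x v ≠ ⊤ ↔ (v ∈ T ∧ ∀ w ∈ S v, σ v ≤ σ w) := by
    intro σ v
    unfold rPerm
    split_ifs with h
    · simp only [ne_eq, not_true_eq_false, false_iff, not_and]
      intro _ hall
      obtain ⟨w, hw1, hw2⟩ := h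
      exact absurd (hall w (by simp [hS, hw2])) (not_le.2 hw1)
    · push_neg at h
      constructor
      · intro hv
        refine ⟨by simp [hT, hv], fun w hw => ?_⟩
        simp only [hS, Finset.mem_filter] at hw
        exact le_of_not_gt fun hlt => absurd hw.2 (not_le.2 (h w hlt))
      · intro ⟨hv, _⟩
        simpa [hT] using hv
  -- the set as a finset
  have hset : ∀ σ : Equiv.Perm (Fin n),
      ({v | rPerm σ x v ≠ ⊤} : Set (Fin n)).ncard
        = (Finset.univ.filter (fun v => rPerm σ x v ≠ ⊤)).card := by
    intro σ
    rw [← Set.ncard_coe_finset]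
    congr 1
    ext v; simp
  -- integral to sum
  rw [MeasureTheory.integral_fintype (Integrable.of_finite)]
  simp only [Measure.real]
  have hμ : ∀ σ : Equiv.Perm (Fin n),
      ((PMF.uniformOfFintype (Equiv.Perm (Fin n))).toMeasure {σ}).toReal = (N : ℝ)⁻¹ := by
    intro σ
    rw [PMF.toMeasure_apply_singleton _ _ (measurableSet_singleton σ), PMF.uniformOfFintype_apply]
    simp [hN, ENNReal.toReal_inv]
  simp_rw [hμ, smul_eq_mul, hset]
  -- card as sum of indicators over T
  have hcard : ∀ σ : Equiv.Perm (Fin n),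
      ((Finset.univ.filter (fun v => rPerm σ x v ≠ ⊤)).card : ℝ)
        = ∑ v ∈ T, (if ∀ w ∈ S v, σ v ≤ σ w then (1:ℝ) else 0) := by
    intro σ
    rw [Finset.sum_boole]
    congr 2
    ext v
    simp only [Finset.mem_filter, Finset.mem_univ, true_and, hsurv σ v]
  simp_rw [hcard, Finset.mul_sum]
  rw [Finset.sum_comm]
  -- compute inner sum for each v ∈ T
  have hvT : ∀ v ∈ T, v ∈ S v := by
    intro v hv; simp [hS]
  have hinner : ∀ v ∈ T,
      (∑ σ : Equiv.Perm (Fin n), (N : ℝ)⁻¹ * (if ∀ w ∈ S v, σ v ≤ σ w then (1:ℝ) else 0))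
        = 1 / ((S v).card : ℝ) := by
    intro v hv
    rw [← Finset.mul_sum, Finset.sum_boole]
    have hc := count_min n (S v) v (hvT v hv)
    have hk : 0 < (S v).card := Finset.card_pos.2 ⟨v, hvT v hv⟩
    have : ((Finset.univ.filter (fun σ : Equiv.Perm (Fin n) => ∀ w ∈ S v, σ v ≤ σ w)).card : ℝ)
        = N / (S v).card := by
      field_simp
      exact_mod_cast hc
    rw [this]
    field_simp
  rw [Finset.sum_congr rfl hinner]
  -- rank bijection
  have hSsub : ∀ v ∈ T, S v ⊆ T := by
    intro v hv w hw
    simp only [hS, Finset.mem_filter, Finset.mem_univ, true_and] at hw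
    simp only [hT, Finset.mem_filter, Finset.mem_univ, true_and] at hv ⊢
    exact fun h => hv (top_le_iff.1 (h ▸ hw))
  have hm : ({v : Fin n | x v ≠ ⊤}).ncard = T.card := by
    rw [← Set.ncard_coe_finset]; congr 1; ext v; simp [hT]
  rw [hm]
  have hmemT : ∀ v, v ∈ T ↔ x v ≠ ⊤ := by intro v; simp [hT]
  -- injectivity of rank
  have hrank_inj : ∀ u ∈ T, ∀ v ∈ T, (S u).card = (S v).card → u = v := by
    intro u hu v hv h
    rcases le_total (x u) (x v) with hle | hle
    · have hsub : S u ⊆ S v := by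
        intro w hw
        simp only [hS, Finset.mem_filter, Finset.mem_univ, true_and] at hw ⊢
        exact hw.trans hle
      have := Finset.eq_of_subset_of_card_le hsub h.ge
      have hvu : x v ≤ x u := by
        have : v ∈ S u := this ▸ hvT v hv
        simpa [hS] using this
      exact hinj ((hmemT u).1 hu) ((hmemT v).1 hv) (le_antisymm hle hvu)
    · have hsub : S v ⊆ S u := by
        intro w hw
        simp only [hS, Finset.mem_filter, Finset.mem_univ, true_and] at hw ⊢
        exact hw.trans hle
      have := Finset.eq_of_subset_of_card_le hsub h.le
      have hvu : x u ≤ x v := by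
        have : u ∈ S v := this ▸ hvT u hu
        simpa [hS] using this
      exact hinj ((hmemT u).1 hu) ((hmemT v).1 hv) (le_antisymm hvu hle)
  -- image of rank is Icc 1 m
  have himg : T.image (fun v => (S v).card) = Finset.Icc 1 T.card := by
    apply Finset.eq_of_subset_of_card_le
    · intro k hk
      simp only [Finset.mem_image] at hk
      obtain ⟨v, hv, rfl⟩ := hk
      rw [Finset.mem_Icc]
      exact ⟨Finset.card_pos.2 ⟨v, hvT v hv⟩, Finset.card_le_card (hSsub v hv)⟩
    · rw [Finset.card_image_of_injOn hrank_inj, Nat.card_Icc]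
      omega
  rw [← himg, Finset.sum_image hrank_inj]
end

section
/- For every real R ≥ 6·∑_{i=1}^{m} 1/i, the probability that at least R indices survive the filter is at most 2^{−R}: P_σ( |{v : r_σ(x)_v ≠ ∞}| ≥ R ) ≤ 2^{−R}. -/
open scoped ENNReal Classical
open MeasureTheory

section Aux

open Finset

variable {n : ℕ}


/-- `v` attains the minimum of `σ` over `S`. -/
def SatP (S : Finset (Fin n)) (v : Fin n) (σ : Equiv.Perm (Fin n)) : Prop :=
  ∀ w ∈ S, σ v ≤ σ w

lemma satP_swap_aux {S A : Finset (Fin n)} {v a b : Fin n} (ha : a ∈ A) (hb : b ∈ A)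
    (hAv : A ⊆ S.erase v) {σ : Equiv.Perm (Fin n)} (h : SatP S v σ) :
    SatP S v (σ * Equiv.swap a b) := by
  have hva : v ≠ a := fun e => (Finset.mem_erase.mp (hAv ha)).1 (e ▸ rfl)
  have hvb : v ≠ b := fun e => (Finset.mem_erase.mp (hAv hb)).1 (e ▸ rfl)
  intro w hw
  have hv : (σ * Equiv.swap a b) v = σ v := by
    simp [Equiv.Perm.mul_apply, Equiv.swap_apply_of_ne_of_ne hva hvb]
  rw [hv]
  have hmem : Equiv.swap a b w ∈ S := by
    rcases eq_or_ne w a with rfl | hwa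
    · simpa [Equiv.swap_apply_left] using (Finset.erase_subset _ _) (hAv hb)
    rcases eq_or_ne w b with rfl | hwb
    · simpa [Equiv.swap_apply_right] using (Finset.erase_subset _ _) (hAv ha)
    · simpa [Equiv.swap_apply_of_ne_of_ne hwa hwb] using hw
  exact h _ hmem

lemma satP_swap {S A : Finset (Fin n)} {v a b : Fin n} (ha : a ∈ A) (hb : b ∈ A)
    (hAv : A ⊆ S.erase v) (σ : Equiv.Perm (Fin n)) :
    SatP S v (σ * Equiv.swap a b) ↔ SatP S v σ := by
  constructor
  · intro h
    have := satP_swap_aux ha hb hAv h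
    simpa [mul_assoc] using this
  · exact satP_swap_aux ha hb hAv

noncomputable def amin (S : Finset (Fin n)) (hS : S.Nonempty) (σ : Equiv.Perm (Fin n)) : Fin n :=
  σ.symm ((S.image σ).min' (hS.image σ))

lemma amin_mem (S : Finset (Fin n)) (hS : S.Nonempty) (σ : Equiv.Perm (Fin n)) :
    amin S hS σ ∈ S := by
  obtain ⟨w, hw, hweq⟩ := Finset.mem_image.mp ((S.image σ).min'_mem (hS.image σ))
  have : amin S hS σ = w := by rw [amin, ← hweq, Equiv.symm_apply_apply]
  rwa [this]

lemma amin_min (S : Finset (Fin n)) (hS : S.Nonempty) (σ : Equiv.Perm (Fin n)) :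
    ∀ w ∈ S, σ (amin S hS σ) ≤ σ w := by
  intro w hw
  rw [amin, Equiv.apply_symm_apply]
  exact Finset.min'_le _ _ (Finset.mem_image_of_mem σ hw)

lemma amin_eq (S : Finset (Fin n)) (hS : S.Nonempty) (σ : Equiv.Perm (Fin n)) {u : Fin n}
    (hu : u ∈ S) (hmin : ∀ w ∈ S, σ u ≤ σ w) : amin S hS σ = u := by
  have h1 := amin_min S hS σ u hu
  have h2 := hmin _ (amin_mem S hS σ)
  exact σ.injective (le_antisymm h1 h2)

lemma card_step (S : Finset (Fin n)) (v : Fin n) (hv : v ∈ S)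
    (Q : Equiv.Perm (Fin n) → Prop)
    (hQ : ∀ (σ : Equiv.Perm (Fin n)) (a b : Fin n), a ∈ S → b ∈ S →
      (Q (σ * Equiv.swap a b) ↔ Q σ)) :
    Nat.card {σ : Equiv.Perm (Fin n) // Q σ ∧ SatP S v σ} * S.card
      = Nat.card {σ : Equiv.Perm (Fin n) // Q σ} := by
  classical
  have hS : S.Nonempty := ⟨v, hv⟩
  have sat' : ∀ (σ : Equiv.Perm (Fin n)) (a : Fin n), a ∈ S → SatP S v σ →
      amin S hS (σ * Equiv.swap v a) = a := by
    intro σ a ha hsat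
    apply amin_eq S hS _ ha
    intro w hw
    have h1 : (σ * Equiv.swap v a) a = σ v := by simp [Equiv.Perm.mul_apply]
    have hmem : Equiv.swap v a w ∈ S := by
      rcases eq_or_ne w v with rfl | hwv
      · simpa [Equiv.swap_apply_left] using ha
      rcases eq_or_ne w a with rfl | hwa
      · simpa [Equiv.swap_apply_right] using hv
      · simpa [Equiv.swap_apply_of_ne_of_ne hwv hwa] using hw
    rw [h1]
    exact hsat _ hmem
  have satfwd : ∀ (σ : Equiv.Perm (Fin n)), SatP S v (σ * Equiv.swap v (amin S hS σ)) := by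
    intro σ w hw
    have h1 : (σ * Equiv.swap v (amin S hS σ)) v = σ (amin S hS σ) := by
      simp [Equiv.Perm.mul_apply]
    have hmem : Equiv.swap v (amin S hS σ) w ∈ S := by
      rcases eq_or_ne w v with rfl | hwv
      · simpa [Equiv.swap_apply_left] using amin_mem S hS σ
      rcases eq_or_ne w (amin S hS σ) with rfl | hwa
      · simpa [Equiv.swap_apply_right] using hv
      · simpa [Equiv.swap_apply_of_ne_of_ne hwv hwa] using hw
    rw [h1]
    exact amin_min S hS σ _ hmem
  have e : {σ : Equiv.Perm (Fin n) // Q σ} ≃ {σ : Equiv.Perm (Fin n) // Q σ ∧ SatP S v σ} × S := by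
    refine
      { toFun := fun s =>
          (⟨s.1 * Equiv.swap v (amin S hS s.1),
            ⟨(hQ s.1 v (amin S hS s.1) hv (amin_mem S hS s.1)).mpr s.2, satfwd s.1⟩⟩,
           ⟨amin S hS s.1, amin_mem S hS s.1⟩),
        invFun := fun t =>
          ⟨t.1.1 * Equiv.swap v t.2.1,
            (hQ t.1.1 v t.2.1 hv t.2.2).mpr t.1.2.1⟩,
        left_inv := ?_, right_inv := ?_ }
    · rintro ⟨σ, hσ⟩
      ext w
      simp [mul_assoc]
    · rintro ⟨⟨σ, hQσ, hsat⟩, ⟨a, ha⟩⟩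
      have h1 : amin S hS (σ * Equiv.swap v a) = a := sat' σ a ha hsat
      refine Prod.ext ?_ ?_
      · apply Subtype.ext
        simp only [h1]
        ext w
        simp [mul_assoc]
      · exact Subtype.ext h1
  rw [Nat.card_congr e, Nat.card_prod, Nat.card_eq_finsetCard]

lemma nested_count : ∀ (L : List (Finset (Fin n) × Fin n)),
    (∀ p ∈ L, p.2 ∈ p.1) →
    L.Pairwise (fun p q => q.1 ⊆ p.1.erase p.2) →
    ∀ (Q : Equiv.Perm (Fin n) → Prop),
    (∀ p ∈ L, ∀ (σ : Equiv.Perm (Fin n)) (a b : Fin n), a ∈ p.1 → b ∈ p.1 →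
      (Q (σ * Equiv.swap a b) ↔ Q σ)) →
    Nat.card {σ : Equiv.Perm (Fin n) // Q σ ∧ ∀ p ∈ L, SatP p.1 p.2 σ}
      * (L.map (fun p => p.1.card)).prod
      = Nat.card {σ : Equiv.Perm (Fin n) // Q σ} := by
  intro L
  induction L with
  | nil =>
    intro _ _ Q _
    simp only [List.map_nil, List.prod_nil, mul_one]
    apply Nat.card_congr
    exact Equiv.subtypeEquivRight (by simp)
  | cons p L ih =>
    intro hmem hpw Q hQ
    obtain ⟨S, v⟩ := p
    have hv : v ∈ S := hmem _ (List.mem_cons_self)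
    have hhead : ∀ q ∈ L, q.1 ⊆ S.erase v := fun q hq => (List.pairwise_cons.mp hpw).1 q hq
    set Q' : Equiv.Perm (Fin n) → Prop := fun σ => Q σ ∧ SatP S v σ with hQ'def
    have hQ' : ∀ q ∈ L, ∀ (σ : Equiv.Perm (Fin n)) (a b : Fin n), a ∈ q.1 → b ∈ q.1 →
        (Q' (σ * Equiv.swap a b) ↔ Q' σ) := by
      intro q hq σ a b ha hb
      constructor
      · rintro ⟨h1, h2⟩
        exact ⟨(hQ q (List.mem_cons_of_mem _ hq) σ a b ha hb).mp h1,
          (satP_swap ha hb (hhead q hq) σ).mp h2⟩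
      · rintro ⟨h1, h2⟩
        exact ⟨(hQ q (List.mem_cons_of_mem _ hq) σ a b ha hb).mpr h1,
          (satP_swap ha hb (hhead q hq) σ).mpr h2⟩
    have ihL := ih (fun q hq => hmem q (List.mem_cons_of_mem _ hq))
      (List.pairwise_cons.mp hpw).2 Q' hQ'
    have hstep := card_step S v hv Q (hQ _ (List.mem_cons_self))
    have hcongr : Nat.card {σ : Equiv.Perm (Fin n) // Q σ ∧ ∀ q ∈ (S, v) :: L, SatP q.1 q.2 σ}
        = Nat.card {σ : Equiv.Perm (Fin n) // Q' σ ∧ ∀ q ∈ L, SatP q.1 q.2 σ} := by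
      apply Nat.card_congr
      apply Equiv.subtypeEquivRight
      intro σ
      simp only [List.mem_cons, hQ'def]
      constructor
      · rintro ⟨h1, h2⟩
        exact ⟨⟨h1, h2 _ (Or.inl rfl)⟩, fun q hq => h2 q (Or.inr hq)⟩
      · rintro ⟨⟨h1, h2⟩, h3⟩
        exact ⟨h1, fun q hq => hq.elim (fun e => e ▸ h2) (h3 q)⟩
    calc Nat.card {σ : Equiv.Perm (Fin n) // Q σ ∧ ∀ q ∈ (S, v) :: L, SatP q.1 q.2 σ}
          * (((S, v) :: L).map (fun p => p.1.card)).prod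
        = (Nat.card {σ : Equiv.Perm (Fin n) // Q' σ ∧ ∀ q ∈ L, SatP q.1 q.2 σ}
            * (L.map (fun p => p.1.card)).prod) * S.card := by
          rw [hcongr, List.map_cons, List.prod_cons]; ring
      _ = Nat.card {σ : Equiv.Perm (Fin n) // Q' σ} * S.card := congrArg (· * S.card) ihL
      _ = Nat.card {σ : Equiv.Perm (Fin n) // Q σ} := hstep

end Aux

open Finset in
set_option maxHeartbeats 1000000 in
/-- For every `R ≥ 6 · H_m` (the `m`-th harmonic number, `m` the number of non-`∞`
entries of `x`), the probability over a uniformly random permutation `σ` that at least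
`R` indices survive the filter is at most `2^{-R}`. -/
theorem survivors_tail_bound (n : ℕ) (x : Fin n → ℝ≥0∞)
    (hinj : Set.InjOn x {v | x v ≠ ⊤})
    (R : ℝ)
    (hR : 6 * ∑ i ∈ Finset.Icc 1 ({v : Fin n | x v ≠ ⊤}).ncard, (1 : ℝ) / i ≤ R) :
    (PMF.uniformOfFintype (Equiv.Perm (Fin n))).toMeasure
        {σ | R ≤ (({v | rPerm σ x v ≠ ⊤} : Set (Fin n)).ncard : ℝ)} ≤
      (2 : ℝ≥0∞) ^ (-R) := by
  classical
  set F : Finset (Fin n) := univ.filter (fun v => x v ≠ ⊤) with hFdef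
  set m : ℕ := F.card with hmdef
  set A : Fin n → Finset (Fin n) := fun v => univ.filter (fun w => x w ≤ x v) with hAdef
  set k : Fin n → ℕ := fun v => (A v).card with hkdef
  set H : ℝ := ∑ i ∈ Finset.Icc 1 m, (1 : ℝ) / i with hHdef
  -- basic set identification
  have hFset : {v : Fin n | x v ≠ ⊤} = (F : Set (Fin n)) := by
    ext v; simp [hFdef]
  have hncard_m : ({v : Fin n | x v ≠ ⊤}).ncard = m := by
    rw [hFset, Set.ncard_coe_finset]
  rw [hncard_m] at hR
  have hRH : 6 * H ≤ R := hR
  have hH0 : 0 ≤ H := by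
    apply Finset.sum_nonneg; intro i _; positivity
  have hR0 : 0 ≤ R := le_trans (by linarith) hRH
  -- facts about A and k
  have hAself : ∀ v, v ∈ A v := by intro v; simp [hAdef]
  have hkpos : ∀ v, 1 ≤ k v := fun v => Finset.card_pos.mpr ⟨v, hAself v⟩
  have hAF : ∀ v ∈ F, A v ⊆ F := by
    intro v hv w hw
    simp only [hAdef, mem_filter, mem_univ, true_and] at hw
    simp only [hFdef, mem_filter, mem_univ, true_and] at hv ⊢
    exact fun hwt => hv (top_le_iff.mp (hwt ▸ hw))
  have hkm : ∀ v ∈ F, k v ≤ m := fun v hv => Finset.card_le_card (hAF v hv)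
  have hxF : ∀ v ∈ F, x v ≠ ⊤ := by
    intro v hv; simpa [hFdef] using hv
  have hAsub : ∀ u v, x u < x v → A u ⊆ (A v).erase v := by
    intro u v huv w hw
    simp only [hAdef, mem_filter, mem_univ, true_and] at hw
    rw [Finset.mem_erase]
    constructor
    · intro e; rw [e] at hw; exact absurd huv (not_lt.mpr hw)
    · simp only [hAdef, mem_filter, mem_univ, true_and]
      exact le_of_lt (lt_of_le_of_lt hw huv)
  have hklt : ∀ u v, x u < x v → k u < k v := by
    intro u v huv
    calc k u ≤ ((A v).erase v).card := Finset.card_le_card (hAsub u v huv)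
      _ < k v := by
        rw [Finset.card_erase_of_mem (hAself v)]
        exact Nat.sub_lt (lt_of_lt_of_le Nat.zero_lt_one (hkpos v)) Nat.zero_lt_one
  have htri : ∀ u ∈ F, ∀ v ∈ F, u ≠ v → x u < x v ∨ x v < x u := by
    intro u hu v hv huv
    have : x u ≠ x v := fun e => huv (hinj (hFset ▸ by exact_mod_cast hu : u ∈ {v | x v ≠ ⊤})
      (by rw [hFset]; exact_mod_cast hv) e)
    exact lt_or_gt_of_ne this
  have hkinj : ∀ u ∈ F, ∀ v ∈ F, u ≠ v → k u ≠ k v := by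
    intro u hu v hv huv
    rcases htri u hu v hv huv with h | h
    · exact Nat.ne_of_lt (hklt u v h)
    · exact (Nat.ne_of_lt (hklt v u h)).symm
  have hkltx : ∀ u ∈ F, ∀ v ∈ F, k u < k v → x u < x v := by
    intro u hu v hv hk
    rcases eq_or_ne u v with rfl | huv
    · omega
    rcases htri u hu v hv huv with h | h
    · exact h
    · exact absurd (hklt v u h) (by omega)
  -- survivors
  set surv : Equiv.Perm (Fin n) → Finset (Fin n) :=
    fun σ => univ.filter (fun v => rPerm σ x v ≠ ⊤) with hsurvdef
  have hsurv_iff : ∀ (σ : Equiv.Perm (Fin n)) (v : Fin n),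
      rPerm σ x v ≠ ⊤ ↔ (x v ≠ ⊤ ∧ SatP (A v) v σ) := by
    intro σ v
    unfold rPerm
    by_cases h : ∃ w, σ w < σ v ∧ x w ≤ x v
    · simp only [h, if_true]
      obtain ⟨w, hw1, hw2⟩ := h
      constructor
      · intro hc; exact absurd rfl hc
      · rintro ⟨-, hsat⟩
        have : σ v ≤ σ w := hsat w (by simp [hAdef, hw2])
        exact absurd hw1 (not_lt.mpr this)
    · simp only [h, if_false]
      constructor
      · intro hv
        refine ⟨hv, fun w hw => ?_⟩
        simp only [hAdef, mem_filter, mem_univ, true_and] at hw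
        by_contra hc
        exact h ⟨w, lt_of_not_ge hc, hw⟩
      · exact fun h => h.1
  have hsurvF : ∀ σ, surv σ ⊆ F := by
    intro σ v hv
    simp only [hsurvdef, mem_filter, mem_univ, true_and] at hv
    simp only [hFdef, mem_filter, mem_univ, true_and]
    exact ((hsurv_iff σ v).mp hv).1
  have hncard_surv : ∀ σ, ({v | rPerm σ x v ≠ ⊤} : Set (Fin n)).ncard = (surv σ).card := by
    intro σ
    have : {v | rPerm σ x v ≠ ⊤} = (surv σ : Set (Fin n)) := by
      ext v; simp [hsurvdef]
    rw [this, Set.ncard_coe_finset]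
  -- the events
  set r : ℕ := ⌈R⌉₊ with hrdef
  set ET : Finset (Fin n) → Finset (Equiv.Perm (Fin n)) :=
    fun T => univ.filter (fun σ => ∀ v ∈ T, SatP (A v) v σ) with hETdef
  set Ef : Finset (Equiv.Perm (Fin n)) :=
    univ.filter (fun σ => R ≤ ((surv σ).card : ℝ)) with hEfdef
  have hsub : Ef ⊆ (Finset.powersetCard r F).biUnion ET := by
    intro σ hσ
    simp only [hEfdef, mem_filter, mem_univ, true_and] at hσ
    have hrcard : r ≤ (surv σ).card := Nat.ceil_le.mpr hσ
    obtain ⟨T, hTsub, hTcard⟩ := Finset.exists_subset_card_eq hrcard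
    rw [Finset.mem_biUnion]
    refine ⟨T, Finset.mem_powersetCard.mpr ⟨hTsub.trans (hsurvF σ), hTcard⟩, ?_⟩
    simp only [hETdef, mem_filter, mem_univ, true_and]
    intro v hv
    have := hTsub hv
    simp only [hsurvdef, mem_filter, mem_univ, true_and] at this
    exact ((hsurv_iff σ v).mp this).2
  -- sorted list for each T
  have hlist : ∀ (c : ℕ) (T : Finset (Fin n)), T.card = c → T ⊆ F →
      ∃ l : List (Fin n), l.toFinset = T ∧ l.Nodup ∧ l.Pairwise (fun p q => k q < k p) := by
    intro c
    induction c with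
    | zero =>
      intro T hc _
      exact ⟨[], by simpa using (Finset.card_eq_zero.mp hc).symm, List.nodup_nil, List.Pairwise.nil⟩
    | succ c ih =>
      intro T hc hTF
      have hT : T.Nonempty := Finset.card_pos.mp (by omega)
      obtain ⟨v, hvT, hvmax⟩ := Finset.exists_max_image T k hT
      obtain ⟨l', hl'fin, hl'nd, hl'pw⟩ := ih (T.erase v)
        (by rw [Finset.card_erase_of_mem hvT]; omega) ((Finset.erase_subset _ _).trans hTF)
      refine ⟨v :: l', ?_, ?_, ?_⟩
      · rw [List.toFinset_cons, hl'fin, Finset.insert_erase hvT]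
      · refine List.Nodup.cons ?_ hl'nd
        intro hv
        have : v ∈ T.erase v := hl'fin ▸ List.mem_toFinset.mpr hv
        exact (Finset.mem_erase.mp this).1 rfl
      · refine List.pairwise_cons.mpr ⟨?_, hl'pw⟩
        intro q hq
        have hqT : q ∈ T.erase v := hl'fin ▸ List.mem_toFinset.mpr hq
        have hqv : q ≠ v := (Finset.mem_erase.mp hqT).1
        have h1 : k q ≤ k v := hvmax q (Finset.mem_erase.mp hqT).2
        have h2 : k q ≠ k v := hkinj q (hTF (Finset.mem_erase.mp hqT).2) v (hTF hvT) hqv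
        omega
  -- counting for each T
  have hcount : ∀ T ∈ Finset.powersetCard r F,
      (ET T).card * ∏ v ∈ T, k v = Fintype.card (Equiv.Perm (Fin n)) := by
    intro T hT
    obtain ⟨hTF, hTcard⟩ := Finset.mem_powersetCard.mp hT
    obtain ⟨l, hlfin, hlnd, hlpw⟩ := hlist T.card T rfl hTF
    set L : List (Finset (Fin n) × Fin n) := l.map (fun v => (A v, v)) with hLdef
    have hmem : ∀ p ∈ L, p.2 ∈ p.1 := by
      intro p hp
      obtain ⟨v, _, rfl⟩ := List.mem_map.mp hp
      exact hAself v
    have hlF : ∀ v ∈ l, v ∈ F := fun v hv => hTF (hlfin ▸ List.mem_toFinset.mpr hv)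
    have hpw : L.Pairwise (fun p q => q.1 ⊆ p.1.erase p.2) := by
      rw [hLdef, List.pairwise_map]
      refine List.Pairwise.imp_of_mem ?_ hlpw
      intro a b ha hb hk
      exact hAsub b a (hkltx b (hlF b hb) a (hlF a ha) hk)
    have hnc := nested_count L hmem hpw (fun _ => True) (by intro _ _ _ _ _ _ _; rfl)
    have h1 : Nat.card {σ : Equiv.Perm (Fin n) // True ∧ ∀ p ∈ L, SatP p.1 p.2 σ}
        = (ET T).card := by
      have hmeml : ∀ v : Fin n, v ∈ l ↔ v ∈ T := by
        intro v; rw [← hlfin, List.mem_toFinset]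
      have he : ∀ σ : Equiv.Perm (Fin n),
          (True ∧ ∀ p ∈ L, SatP p.1 p.2 σ) ↔ (∀ v ∈ T, SatP (A v) v σ) := by
        intro σ
        rw [true_and, hLdef]
        constructor
        · intro h v hv
          exact h (A v, v) (List.mem_map.mpr ⟨v, (hmeml v).mpr hv, rfl⟩)
        · intro h p hp
          obtain ⟨v, hvl, rfl⟩ := List.mem_map.mp hp
          exact h v ((hmeml v).mp hvl)
      rw [Nat.card_congr (Equiv.subtypeEquivRight he), Nat.card_eq_fintype_card,
        Fintype.card_subtype]
    have h2 : (L.map (fun p => p.1.card)).prod = ∏ v ∈ T, k v := by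
      rw [hLdef, List.map_map]
      have : ((fun p : Finset (Fin n) × Fin n => p.1.card) ∘ fun v => (A v, v)) = k := rfl
      rw [this, ← hlfin, List.prod_toFinset k hlnd]
    have h3 : Nat.card {σ : Equiv.Perm (Fin n) // True} = Fintype.card (Equiv.Perm (Fin n)) := by
      rw [Nat.card_congr (Equiv.subtypeUnivEquiv fun _ => trivial), Nat.card_eq_fintype_card]
    rw [h1, h2, h3] at hnc
    exact hnc
  -- pass to real numbers
  set N : ℕ := Fintype.card (Equiv.Perm (Fin n)) with hNdef
  have hN : 0 < N := Fintype.card_pos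
  have hprob : ∀ T ∈ Finset.powersetCard r F,
      ((ET T).card : ℝ) / N = ∏ v ∈ T, ((k v : ℝ))⁻¹ := by
    intro T hT
    have hc := hcount T hT
    have hkprodpos : (0:ℝ) < ∏ v ∈ T, (k v : ℝ) := by
      apply Finset.prod_pos
      intro v _
      exact_mod_cast lt_of_lt_of_le Nat.zero_lt_one (hkpos v)
    have hcR : ((ET T).card : ℝ) * ∏ v ∈ T, (k v : ℝ) = (N : ℝ) := by
      rw [← Nat.cast_prod, ← Nat.cast_mul, hc]
    have hNne : (N : ℝ) ≠ 0 := Nat.cast_ne_zero.mpr hN.ne'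
    rw [Finset.prod_inv_distrib, inv_eq_one_div,
      div_eq_div_iff hNne hkprodpos.ne', one_mul]
    linarith [hcR]
  have hEfcard : (Ef.card : ℝ) ≤ ∑ T ∈ Finset.powersetCard r F, ((ET T).card : ℝ) := by
    have h1 : Ef.card ≤ ∑ T ∈ Finset.powersetCard r F, (ET T).card :=
      le_trans (Finset.card_le_card hsub) (Finset.card_biUnion_le)
    exact_mod_cast h1
  -- the real-valued estimate
  have hsumk : ∑ v ∈ F, ((k v : ℝ))⁻¹ ≤ H := by
    have himg : ∑ j ∈ F.image k, ((j:ℝ))⁻¹ = ∑ v ∈ F, ((k v : ℝ))⁻¹ := by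
      refine Finset.sum_image ?_
      intro u hu v hv huv
      by_contra hne
      exact hkinj u hu v hv hne huv
    rw [← himg, hHdef]
    have hsub' : F.image k ⊆ Finset.Icc 1 m := by
      intro j hj
      obtain ⟨v, hv, rfl⟩ := Finset.mem_image.mp hj
      exact Finset.mem_Icc.mpr ⟨hkpos v, hkm v hv⟩
    simp only [one_div]
    refine Finset.sum_le_sum_of_subset_of_nonneg hsub' ?_
    intro i _ _
    positivity
  have hmain : (Ef.card : ℝ) / N ≤ ((4:ℝ)⁻¹)^r * Real.exp (4 * H) := by
    have step1 : (Ef.card : ℝ) / N ≤ ∑ T ∈ Finset.powersetCard r F, ∏ v ∈ T, ((k v : ℝ))⁻¹ := by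
      rw [div_le_iff₀ (by exact_mod_cast hN)]
      have hNne : (N : ℝ) ≠ 0 := Nat.cast_ne_zero.mpr hN.ne'
      calc (Ef.card : ℝ) ≤ ∑ T ∈ Finset.powersetCard r F, ((ET T).card : ℝ) := hEfcard
        _ = ∑ T ∈ Finset.powersetCard r F, ((ET T).card : ℝ) / N * N := by
            refine Finset.sum_congr rfl ?_
            intro T _
            rw [div_mul_cancel₀ _ hNne]
        _ = (∑ T ∈ Finset.powersetCard r F, ((ET T).card : ℝ) / N) * N := by
            rw [Finset.sum_mul]
        _ = (∑ T ∈ Finset.powersetCard r F, ∏ v ∈ T, ((k v : ℝ))⁻¹) * N := by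
            rw [Finset.sum_congr rfl hprob]
    have step2 : ∑ T ∈ Finset.powersetCard r F, ∏ v ∈ T, ((k v : ℝ))⁻¹
        = ((4:ℝ)⁻¹)^r * ∑ T ∈ Finset.powersetCard r F, ∏ v ∈ T, (4 * ((k v : ℝ))⁻¹) := by
      rw [Finset.mul_sum]
      refine Finset.sum_congr rfl ?_
      intro T hT
      have hTcard : T.card = r := (Finset.mem_powersetCard.mp hT).2
      rw [Finset.prod_mul_distrib, Finset.prod_const, hTcard]
      rw [← mul_assoc, ← mul_pow]
      norm_num
    have step3 : ∑ T ∈ Finset.powersetCard r F, ∏ v ∈ T, (4 * ((k v : ℝ))⁻¹)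
        ≤ ∑ T ∈ F.powerset, ∏ v ∈ T, (4 * ((k v : ℝ))⁻¹) := by
      refine Finset.sum_le_sum_of_subset_of_nonneg ?_ ?_
      · intro T hT
        exact Finset.mem_powerset.mpr (Finset.mem_powersetCard.mp hT).1
      · intro T _ _
        apply Finset.prod_nonneg
        intro v _
        positivity
    have step4 : ∑ T ∈ F.powerset, ∏ v ∈ T, (4 * ((k v : ℝ))⁻¹)
        = ∏ v ∈ F, (4 * ((k v : ℝ))⁻¹ + 1) := by
      rw [Finset.prod_add]
      refine Finset.sum_congr rfl ?_
      intro T _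
      simp
    have step5 : ∏ v ∈ F, (4 * ((k v : ℝ))⁻¹ + 1) ≤ Real.exp (4 * H) := by
      calc ∏ v ∈ F, (4 * ((k v : ℝ))⁻¹ + 1)
          ≤ ∏ v ∈ F, Real.exp (4 * ((k v : ℝ))⁻¹) := by
            refine Finset.prod_le_prod ?_ ?_
            · intro v _; positivity
            · intro v _; exact Real.add_one_le_exp _
        _ = Real.exp (∑ v ∈ F, 4 * ((k v : ℝ))⁻¹) := by rw [Real.exp_sum]
        _ ≤ Real.exp (4 * H) := by
            apply Real.exp_le_exp.mpr
            rw [← Finset.mul_sum]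
            linarith [hsumk]
    calc (Ef.card : ℝ) / N ≤ ∑ T ∈ Finset.powersetCard r F, ∏ v ∈ T, ((k v : ℝ))⁻¹ := step1
      _ = ((4:ℝ)⁻¹)^r * ∑ T ∈ Finset.powersetCard r F, ∏ v ∈ T, (4 * ((k v : ℝ))⁻¹) := step2
      _ ≤ ((4:ℝ)⁻¹)^r * Real.exp (4 * H) := by
          refine mul_le_mul_of_nonneg_left (le_trans step3 (step4 ▸ step5)) ?_
          positivity
  have hfinal : ((4:ℝ)⁻¹)^r * Real.exp (4 * H) ≤ (2:ℝ) ^ (-R) := by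
    have hrR : R ≤ (r : ℝ) := Nat.le_ceil R
    have hlog2 : (0.6931471803 : ℝ) < Real.log 2 := Real.log_two_gt_d9
    have e1 : Real.exp (((2*r : ℕ) : ℝ) * Real.log 2) = (2:ℝ)^(2*r) := by
      rw [Real.exp_nat_mul, Real.exp_log two_pos]
    have h4 : ((4:ℝ)⁻¹)^r = Real.exp (-(((2*r : ℕ) : ℝ) * Real.log 2)) := by
      rw [Real.exp_neg, e1, pow_mul, inv_pow]
      norm_num
    have h2R : (2:ℝ) ^ (-R) = Real.exp (Real.log 2 * (-R)) :=
      Real.rpow_def_of_pos (by norm_num) _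
    rw [h4, ← Real.exp_add, h2R]
    apply Real.exp_le_exp.mpr
    push_cast
    nlinarith [hrR, hlog2, hRH, hH0, hR0]
  -- put it together in ℝ≥0∞
  have hEs : {σ : Equiv.Perm (Fin n) | R ≤ ((({v | rPerm σ x v ≠ ⊤} : Set (Fin n)).ncard : ℕ) : ℝ)}
      = (Ef : Set (Equiv.Perm (Fin n))) := by
    ext σ
    simp only [Set.mem_setOf_eq, Finset.coe_filter, hEfdef, Finset.mem_filter,
      Finset.mem_univ, true_and, Set.mem_setOf_eq]
    rw [hncard_surv σ]
  rw [hEs]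
  rw [PMF.toMeasure_uniformOfFintype_apply _ MeasurableSpace.measurableSet_top]
  simp only [Finset.coe_sort_coe, Fintype.card_coe]
  have hconv : ((Ef.card : ℝ≥0∞) / (Fintype.card (Equiv.Perm (Fin n)) : ℝ≥0∞))
      = ENNReal.ofReal ((Ef.card : ℝ) / N) := by
    rw [ENNReal.ofReal_div_of_pos (by exact_mod_cast hN), ENNReal.ofReal_natCast,
      ENNReal.ofReal_natCast, hNdef]
  rw [hconv]
  have h2e : (2 : ℝ≥0∞) ^ (-R) = ENNReal.ofReal ((2:ℝ) ^ (-R)) := by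
    rw [← ENNReal.ofReal_rpow_of_pos (by norm_num : (0:ℝ) < 2)]
    norm_num
  rw [h2e]
  exact ENNReal.ofReal_le_ofReal (le_trans hmain hfinal)
end
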